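/- arXiv:2003.13565 — 5 statements merged into one kernel-verified Lean document; each statement's English description precedes it below -/
import Mathlib

section
/- (Combinatorial content of Lemma 3.3 and Proposition 3.6) For every plane partition π and every integer m ∈ ℤ, the coefficient c_{(m,m,m)}(π,π) of t_1^m t_2^m t_3^m in the vertex term V(π,π) vanishes; in particular V(π,π) has zero constant term. (Geometrically: no integer power of the Calabi–Yau weight 𝔱 = t_1t_2t_3 — in particular no trivial weight — occurs in the virtual tangent space of the Quot scheme at a torus-fixed point, so the deformations and obstructions at a fixed point are entirely T-movable.) -/
open Finset

/-- A plane partition: a finite, downward-closed subset of ℕ³. -/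
def IsPlanePartition (π : Finset (ℕ × ℕ × ℕ)) : Prop :=
  ∀ p ∈ π, ∀ q : ℕ × ℕ × ℕ, q.1 ≤ p.1 → q.2.1 ≤ p.2.1 → q.2.2 ≤ p.2.2 → q ∈ π

/-- `Q_π = Σ_{(a,b,c) ∈ π} t₁^a t₂^b t₃^c` in the Laurent polynomial ring
`ℤ[t₁^{±1}, t₂^{±1}, t₃^{±1}]`. -/
noncomputable def Qpoly (π : Finset (ℕ × ℕ × ℕ)) : AddMonoidAlgebra ℤ (ℤ × ℤ × ℤ) :=
  ∑ p ∈ π, AddMonoidAlgebra.single ((p.1 : ℤ), (p.2.1 : ℤ), (p.2.2 : ℤ)) 1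

/-- The image of `Q_π` under the bar involution `tᵢ ↦ tᵢ⁻¹`. -/
noncomputable def Qbar (π : Finset (ℕ × ℕ × ℕ)) : AddMonoidAlgebra ℤ (ℤ × ℤ × ℤ) :=
  ∑ p ∈ π, AddMonoidAlgebra.single (-(p.1 : ℤ), -(p.2.1 : ℤ), -(p.2.2 : ℤ)) 1

/-- The vertex term
`V(π,π') = Q_{π'} − 𝔱⁻¹·(Q_π bar) + 𝔱⁻¹(1−t₁)(1−t₂)(1−t₃)·Q_{π'}·(Q_π bar)`,
where `𝔱 = t₁t₂t₃`. -/
noncomputable def vertexTerm (π π' : Finset (ℕ × ℕ × ℕ)) : AddMonoidAlgebra ℤ (ℤ × ℤ × ℤ) :=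
  Qpoly π' - AddMonoidAlgebra.single (-1, -1, -1) 1 * Qbar π +
    AddMonoidAlgebra.single (-1, -1, -1) 1 *
      ((1 - AddMonoidAlgebra.single (1, 0, 0) 1) * (1 - AddMonoidAlgebra.single (0, 1, 0) 1) *
        (1 - AddMonoidAlgebra.single (0, 0, 1) 1)) * Qpoly π' * Qbar π

/-- The coefficient `c_μ(π,π')` of `t^μ` in `V(π,π')`. -/
noncomputable def vc (π π' : Finset (ℕ × ℕ × ℕ)) (μ : ℤ × ℤ × ℤ) : ℤ :=
  (vertexTerm π π').coeff μ

namespace NoCY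

/-- Embedding of ℕ³ into ℤ³. -/
def E (p : ℕ × ℕ × ℕ) : ℤ × ℤ × ℤ := ((p.1 : ℤ), (p.2.1 : ℤ), (p.2.2 : ℤ))

lemma E_inj : Function.Injective E := by
  intro a b h
  simp only [E, Prod.mk.injEq] at h
  rw [Prod.ext_iff, Prod.ext_iff]
  omega

/-- The number (0 or 1) of elements of `σ` mapping to `w ∈ ℤ³`. -/
def cnt1 (σ : Finset (ℕ × ℕ × ℕ)) (w : ℤ × ℤ × ℤ) : ℤ :=
  ((σ.filter (fun q => E q = w)).card : ℤ)

/-- The number of pairs `(x, y) ∈ σ × σ` with `E x - E y = v`. -/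
def cnt2 (σ : Finset (ℕ × ℕ × ℕ)) (v : ℤ × ℤ × ℤ) : ℤ :=
  ∑ x ∈ σ, cnt1 σ (E x - v)

lemma cnt1_sum (σ : Finset (ℕ × ℕ × ℕ)) (w : ℤ × ℤ × ℤ) :
    cnt1 σ w = ∑ q ∈ σ, (if E q = w then (1 : ℤ) else 0) := by
  rw [cnt1, Finset.sum_boole]

lemma Qpoly_apply (σ : Finset (ℕ × ℕ × ℕ)) (w : ℤ × ℤ × ℤ) : (Qpoly σ).coeff w = cnt1 σ w := by
  rw [cnt1_sum, Qpoly, AddMonoidAlgebra.coeff_sum, Finsupp.finset_sum_apply]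
  refine Finset.sum_congr rfl fun q _ => ?_
  classical
  rw [show (AddMonoidAlgebra.single ((q.1 : ℤ), (q.2.1 : ℤ), (q.2.2 : ℤ)) (1:ℤ)).coeff = Finsupp.single (E q) 1 from rfl,
    Finsupp.single_apply]

lemma Qbar_apply (σ : Finset (ℕ × ℕ × ℕ)) (w : ℤ × ℤ × ℤ) : (Qbar σ).coeff w = cnt1 σ (-w) := by
  rw [cnt1_sum, Qbar, AddMonoidAlgebra.coeff_sum, Finsupp.finset_sum_apply]
  refine Finset.sum_congr rfl fun q _ => ?_
  classical
  rw [show (AddMonoidAlgebra.single (-(q.1 : ℤ), -(q.2.1 : ℤ), -(q.2.2 : ℤ)) (1:ℤ)).coeff = Finsupp.single (-(E q)) 1 from by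
      rw [AddMonoidAlgebra.coeff_single, E, Prod.neg_mk, Prod.neg_mk],
    Finsupp.single_apply]
  refine if_congr ?_ rfl rfl
  constructor
  · intro h; rw [← h, neg_neg]
  · intro h; rw [h, neg_neg]

lemma smQbar_apply (σ : Finset (ℕ × ℕ × ℕ)) (d μ : ℤ × ℤ × ℤ) :
    (AddMonoidAlgebra.single d (1:ℤ) * Qbar σ).coeff μ = cnt1 σ (d - μ) := by
  rw [AddMonoidAlgebra.coeff_single_mul_apply, one_mul, Qbar_apply]
  congr 1
  abel

lemma QQmul (σ : Finset (ℕ × ℕ × ℕ)) :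
    Qpoly σ * Qbar σ = ∑ x ∈ σ, ∑ y ∈ σ, AddMonoidAlgebra.single (E x - E y) (1:ℤ) := by
  rw [Qpoly, Qbar, Finset.sum_mul_sum]
  refine Finset.sum_congr rfl fun x _ => Finset.sum_congr rfl fun y _ => ?_
  rw [AddMonoidAlgebra.single_mul_single, one_mul]
  congr 1

lemma sm_apply (σ : Finset (ℕ × ℕ × ℕ)) (d μ : ℤ × ℤ × ℤ) :
    (AddMonoidAlgebra.single d (1:ℤ) * (Qpoly σ * Qbar σ)).coeff μ = cnt2 σ (μ - d) := by
  rw [AddMonoidAlgebra.coeff_single_mul_apply, one_mul, neg_add_eq_sub, QQmul,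
    AddMonoidAlgebra.coeff_sum, Finsupp.finset_sum_apply, cnt2]
  refine Finset.sum_congr rfl fun x _ => ?_
  rw [AddMonoidAlgebra.coeff_sum, Finsupp.finset_sum_apply, cnt1_sum]
  refine Finset.sum_congr rfl fun y _ => ?_
  classical
  rw [show (AddMonoidAlgebra.single (E x - E y) (1:ℤ)).coeff = Finsupp.single (E x - E y) (1:ℤ) from rfl,
    Finsupp.single_apply]
  refine if_congr ?_ rfl rfl
  constructor
  · intro h; rw [← h]; abel
  · intro h; rw [h]; abel

lemma prefactor :
    AddMonoidAlgebra.single ((-1, -1, -1) : ℤ × ℤ × ℤ) (1:ℤ) *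
      ((1 - AddMonoidAlgebra.single (1, 0, 0) 1) * (1 - AddMonoidAlgebra.single (0, 1, 0) 1) *
        (1 - AddMonoidAlgebra.single (0, 0, 1) 1)) =
    AddMonoidAlgebra.single ((-1,-1,-1) : ℤ × ℤ × ℤ) 1
      - AddMonoidAlgebra.single ((0,-1,-1) : ℤ × ℤ × ℤ) 1
      - AddMonoidAlgebra.single ((-1,0,-1) : ℤ × ℤ × ℤ) 1
      - AddMonoidAlgebra.single ((-1,-1,0) : ℤ × ℤ × ℤ) 1
      + AddMonoidAlgebra.single ((0,0,-1) : ℤ × ℤ × ℤ) 1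
      + AddMonoidAlgebra.single ((0,-1,0) : ℤ × ℤ × ℤ) 1
      + AddMonoidAlgebra.single ((-1,0,0) : ℤ × ℤ × ℤ) 1
      - AddMonoidAlgebra.single ((0,0,0) : ℤ × ℤ × ℤ) 1 := by
  simp only [mul_sub, sub_mul, mul_one, one_mul, AddMonoidAlgebra.single_mul_single,
    Prod.mk_add_mk]
  norm_num
  abel

lemma vc_formula (π : Finset (ℕ × ℕ × ℕ)) (μ : ℤ × ℤ × ℤ) :
    vc π π μ = cnt1 π μ - cnt1 π ((-1,-1,-1) - μ)
      + (cnt2 π (μ - (-1,-1,-1)) - cnt2 π (μ - (0,-1,-1)) - cnt2 π (μ - (-1,0,-1))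
        - cnt2 π (μ - (-1,-1,0)) + cnt2 π (μ - (0,0,-1)) + cnt2 π (μ - (0,-1,0))
        + cnt2 π (μ - (-1,0,0)) - cnt2 π (μ - (0,0,0))) := by
  simp only [vc, vertexTerm]
  rw [prefactor]
  simp only [sub_mul, add_mul, mul_assoc]
  rw [show ∀ f g : AddMonoidAlgebra ℤ (ℤ×ℤ×ℤ), ∀ w, (f + g).coeff w = f.coeff w + g.coeff w from fun f g w => rfl]
  rw [show ∀ f g : AddMonoidAlgebra ℤ (ℤ×ℤ×ℤ), ∀ w, (f - g).coeff w = f.coeff w - g.coeff w from fun f g w =>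
    Finsupp.sub_apply f.coeff g.coeff w]
  simp only [show ∀ f g : AddMonoidAlgebra ℤ (ℤ×ℤ×ℤ), ∀ w, (f + g).coeff w = f.coeff w + g.coeff w from fun f g w => rfl,
    show ∀ f g : AddMonoidAlgebra ℤ (ℤ×ℤ×ℤ), ∀ w, (f - g).coeff w = f.coeff w - g.coeff w from fun f g w =>
      Finsupp.sub_apply f.coeff g.coeff w]
  rw [Qpoly_apply, smQbar_apply]
  simp only [sm_apply]

lemma cnt1_insert (σ : Finset (ℕ × ℕ × ℕ)) (p : ℕ × ℕ × ℕ) (hp : p ∉ σ) (w : ℤ × ℤ × ℤ) :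
    cnt1 (insert p σ) w = cnt1 σ w + (if E p = w then (1:ℤ) else 0) := by
  classical
  rw [cnt1, cnt1, Finset.filter_insert]
  split_ifs with h
  · rw [Finset.card_insert_of_notMem (fun hmem => hp (Finset.mem_of_mem_filter _ hmem))]
    push_cast; ring
  · rw [add_zero]

lemma cnt1_insert_tri (σ : Finset (ℕ × ℕ × ℕ)) (p : ℕ × ℕ × ℕ) (hp : p ∉ σ) (w1 w2 w3 : ℤ) :
    cnt1 (insert p σ) (w1, w2, w3) = cnt1 σ (w1, w2, w3)
      + (if (p.1:ℤ) = w1 ∧ (p.2.1:ℤ) = w2 ∧ (p.2.2:ℤ) = w3 then (1:ℤ) else 0) := by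
  rw [cnt1_insert σ p hp]
  congr 1
  exact if_congr (by simp [E, Prod.mk.injEq]) rfl rfl

lemma cnt2_insert (σ : Finset (ℕ × ℕ × ℕ)) (p : ℕ × ℕ × ℕ) (hp : p ∉ σ) (v1 v2 v3 : ℤ) :
    cnt2 (insert p σ) (v1, v2, v3) = cnt2 σ (v1, v2, v3)
      + (cnt1 σ (E p - (v1, v2, v3)) + cnt1 σ (E p + (v1, v2, v3)))
      + (if v1 = 0 ∧ v2 = 0 ∧ v3 = 0 then (1:ℤ) else 0) := by
  classical
  rw [cnt2, Finset.sum_insert hp]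
  simp only [cnt1_insert σ p hp]
  rw [Finset.sum_add_distrib]
  have h2 : (∑ x ∈ σ, if E p = E x - (v1,v2,v3) then (1:ℤ) else 0) = cnt1 σ (E p + (v1,v2,v3)) := by
    rw [cnt1_sum]
    refine Finset.sum_congr rfl fun x _ => if_congr ?_ rfl rfl
    constructor
    · intro h; rw [h]; abel
    · intro h; rw [h]; abel
  have h3 : (if E p = E p - ((v1,v2,v3) : ℤ×ℤ×ℤ) then (1:ℤ) else 0)
      = (if v1 = 0 ∧ v2 = 0 ∧ v3 = 0 then (1:ℤ) else 0) := by
    refine if_congr ?_ rfl rfl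
    constructor
    · intro h
      have h' : ((v1,v2,v3) : ℤ×ℤ×ℤ) = 0 := sub_eq_self.mp h.symm
      rw [Prod.mk_eq_zero, Prod.mk_eq_zero] at h'
      tauto
    · rintro ⟨rfl, rfl, rfl⟩
      rw [show ((0,0,0) : ℤ×ℤ×ℤ) = 0 from rfl, sub_zero]
  rw [h2, h3, cnt2]
  ring

section Step

variable (π : Finset (ℕ × ℕ × ℕ)) (p : ℕ × ℕ × ℕ)

lemma Cplus (hπ' : IsPlanePartition (π.erase p)) (u1 u2 u3 : ℤ)
    (h1 : 0 ≤ u1) (h2 : 0 ≤ u2) (h3 : 0 ≤ u3) :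
    cnt1 (π.erase p) (E p + (u1, u2, u3)) = 0 := by
  rw [cnt1, Nat.cast_eq_zero, Finset.card_eq_zero, Finset.filter_eq_empty_iff]
  intro q hq hEq
  rw [E, E, Prod.mk_add_mk, Prod.mk_add_mk, Prod.mk.injEq, Prod.mk.injEq] at hEq
  obtain ⟨e1, e2, e3⟩ := hEq
  exact Finset.notMem_erase p π (hπ' q hq p (by omega) (by omega) (by omega))

lemma Cminus (hπ : IsPlanePartition π) (hp : p ∈ π) (u1 u2 u3 : ℤ)
    (h1 : 0 ≤ u1) (h2 : 0 ≤ u2) (h3 : 0 ≤ u3) :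
    cnt1 (π.erase p) (E p - (u1, u2, u3)) =
      if ¬(u1 = 0 ∧ u2 = 0 ∧ u3 = 0) ∧ u1 ≤ (p.1:ℤ) ∧ u2 ≤ (p.2.1:ℤ) ∧ u3 ≤ (p.2.2:ℤ)
        then 1 else 0 := by
  split_ifs with h
  · obtain ⟨hne, hb1, hb2, hb3⟩ := h
    obtain ⟨a, ha⟩ : ∃ a : ℕ, (a:ℤ) = (p.1:ℤ) - u1 := ⟨((p.1:ℤ) - u1).toNat, by omega⟩
    obtain ⟨b, hb⟩ : ∃ b : ℕ, (b:ℤ) = (p.2.1:ℤ) - u2 := ⟨((p.2.1:ℤ) - u2).toNat, by omega⟩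
    obtain ⟨c, hc⟩ : ∃ c : ℕ, (c:ℤ) = (p.2.2:ℤ) - u3 := ⟨((p.2.2:ℤ) - u3).toNat, by omega⟩
    have hEq : E (a,b,c) = E p - (u1,u2,u3) := by
      rw [E, E, Prod.mk_sub_mk, Prod.mk_sub_mk, Prod.mk.injEq, Prod.mk.injEq]
      exact ⟨by exact_mod_cast ha, by exact_mod_cast hb, by exact_mod_cast hc⟩
    have habc : (a,b,c) ∈ π := by
      refine hπ p hp (a,b,c) ?_ ?_ ?_ <;> [show a ≤ p.1; show b ≤ p.2.1; show c ≤ p.2.2] <;> omega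
    have hne' : (a,b,c) ≠ p := by
      intro h
      rw [Prod.ext_iff, Prod.ext_iff] at h
      have e1 : a = p.1 := h.1
      have e2 : b = p.2.1 := h.2.1
      have e3 : c = p.2.2 := h.2.2
      omega
    have : (π.erase p).filter (fun q => E q = E p - ((u1,u2,u3) : ℤ×ℤ×ℤ)) = {(a,b,c)} := by
      apply Finset.eq_singleton_iff_unique_mem.mpr
      constructor
      · rw [Finset.mem_filter, Finset.mem_erase]
        exact ⟨⟨hne', habc⟩, hEq⟩
      · intro x hx
        rw [Finset.mem_filter] at hx
        exact E_inj (hx.2.trans hEq.symm)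
    rw [cnt1, this, Finset.card_singleton, Nat.cast_one]
  · rw [cnt1, Nat.cast_eq_zero, Finset.card_eq_zero, Finset.filter_eq_empty_iff]
    intro q hq hEq
    rw [E, E, Prod.mk_sub_mk, Prod.mk_sub_mk, Prod.mk.injEq, Prod.mk.injEq] at hEq
    obtain ⟨e1, e2, e3⟩ := hEq
    have hu : u1 = 0 ∧ u2 = 0 ∧ u3 = 0 := by omega
    obtain ⟨q1, q2⟩ := Finset.mem_erase.mp hq
    apply q1
    rw [Prod.ext_iff, Prod.ext_iff]
    refine ⟨by omega, by omega, by omega⟩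

lemma hD (hπ : IsPlanePartition π) (hp : p ∈ π) (hπ' : IsPlanePartition (π.erase p))
    (v1 v2 v3 : ℤ)
    (hv : (0 ≤ v1 ∧ 0 ≤ v2 ∧ 0 ≤ v3) ∨ (v1 ≤ 0 ∧ v2 ≤ 0 ∧ v3 ≤ 0)) :
    cnt1 (π.erase p) (E p - (v1, v2, v3)) + cnt1 (π.erase p) (E p + (v1, v2, v3)) =
      (if -(p.1:ℤ) ≤ v1 ∧ v1 ≤ (p.1:ℤ) ∧ -(p.2.1:ℤ) ≤ v2 ∧ v2 ≤ (p.2.1:ℤ)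
          ∧ -(p.2.2:ℤ) ≤ v3 ∧ v3 ≤ (p.2.2:ℤ) then (1:ℤ) else 0)
        - (if v1 = 0 ∧ v2 = 0 ∧ v3 = 0 then (1:ℤ) else 0) := by
  rcases hv with ⟨h1, h2, h3⟩ | ⟨h1, h2, h3⟩
  · rw [Cminus π p hπ hp v1 v2 v3 h1 h2 h3, Cplus π p hπ' v1 v2 v3 h1 h2 h3]
    have hp1 : (0:ℤ) ≤ (p.1:ℤ) := Int.natCast_nonneg _
    have hp2 : (0:ℤ) ≤ (p.2.1:ℤ) := Int.natCast_nonneg _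
    have hp3 : (0:ℤ) ≤ (p.2.2:ℤ) := Int.natCast_nonneg _
    split_ifs <;> omega
  · have e1 : E p - ((v1,v2,v3) : ℤ×ℤ×ℤ) = E p + (-v1, -v2, -v3) := by
      rw [sub_eq_add_neg, Prod.neg_mk, Prod.neg_mk]
    have e2 : E p + ((v1,v2,v3) : ℤ×ℤ×ℤ) = E p - (-v1, -v2, -v3) := by
      rw [sub_eq_add_neg, Prod.neg_mk, Prod.neg_mk, neg_neg, neg_neg, neg_neg]
    rw [e1, e2, Cminus π p hπ hp (-v1) (-v2) (-v3) (by omega) (by omega) (by omega),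
      Cplus π p hπ' (-v1) (-v2) (-v3) (by omega) (by omega) (by omega)]
    have hp1 : (0:ℤ) ≤ (p.1:ℤ) := Int.natCast_nonneg _
    have hp2 : (0:ℤ) ≤ (p.2.1:ℤ) := Int.natCast_nonneg _
    have hp3 : (0:ℤ) ≤ (p.2.2:ℤ) := Int.natCast_nonneg _
    split_ifs <;> omega

end Step

set_option maxHeartbeats 4000000 in
lemma step (a b c m : ℤ) (ha : 0 ≤ a) (hb : 0 ≤ b) (hc : 0 ≤ c) :
    (if a = m ∧ b = m ∧ c = m then (1:ℤ) else 0) -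
      (if a = -1-m ∧ b = -1-m ∧ c = -1-m then (1:ℤ) else 0) +
    ((if -a ≤ m+1 ∧ m+1 ≤ a ∧ -b ≤ m+1 ∧ m+1 ≤ b ∧ -c ≤ m+1 ∧ m+1 ≤ c then (1:ℤ) else 0)
     - (if -a ≤ m ∧ m ≤ a ∧ -b ≤ m+1 ∧ m+1 ≤ b ∧ -c ≤ m+1 ∧ m+1 ≤ c then (1:ℤ) else 0)
     - (if -a ≤ m+1 ∧ m+1 ≤ a ∧ -b ≤ m ∧ m ≤ b ∧ -c ≤ m+1 ∧ m+1 ≤ c then (1:ℤ) else 0)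
     - (if -a ≤ m+1 ∧ m+1 ≤ a ∧ -b ≤ m+1 ∧ m+1 ≤ b ∧ -c ≤ m ∧ m ≤ c then (1:ℤ) else 0)
     + (if -a ≤ m ∧ m ≤ a ∧ -b ≤ m ∧ m ≤ b ∧ -c ≤ m+1 ∧ m+1 ≤ c then (1:ℤ) else 0)
     + (if -a ≤ m ∧ m ≤ a ∧ -b ≤ m+1 ∧ m+1 ≤ b ∧ -c ≤ m ∧ m ≤ c then (1:ℤ) else 0)
     + (if -a ≤ m+1 ∧ m+1 ≤ a ∧ -b ≤ m ∧ m ≤ b ∧ -c ≤ m ∧ m ≤ c then (1:ℤ) else 0)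
     - (if -a ≤ m ∧ m ≤ a ∧ -b ≤ m ∧ m ≤ b ∧ -c ≤ m ∧ m ≤ c then (1:ℤ) else 0)) = 0 := by
  split_ifs <;> omega

lemma key (π : Finset (ℕ × ℕ × ℕ)) : IsPlanePartition π → ∀ m : ℤ,
    cnt1 π (m,m,m) - cnt1 π (-1-m,-1-m,-1-m)
      + (cnt2 π (m+1,m+1,m+1) - cnt2 π (m,m+1,m+1) - cnt2 π (m+1,m,m+1) - cnt2 π (m+1,m+1,m)
        + cnt2 π (m,m,m+1) + cnt2 π (m,m+1,m) + cnt2 π (m+1,m,m) - cnt2 π (m,m,m)) = 0 := by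
  classical
  induction π using Finset.strongInduction with
  | _ π ih =>
    intro hπ m
    rcases π.eq_empty_or_nonempty with rfl | hne
    · simp [cnt1, cnt2]
    · obtain ⟨p, hp, hmax⟩ := Finset.exists_max_image π (fun q => q.1 + q.2.1 + q.2.2) hne
      have hp' : p ∉ π.erase p := Finset.notMem_erase _ _
      have hπ' : IsPlanePartition (π.erase p) := by
        intro q hq r h1 h2 h3
        rw [Finset.mem_erase] at hq ⊢
        refine ⟨?_, hπ q hq.2 r h1 h2 h3⟩
        rintro rfl
        have h4 := hmax q hq.2
        apply hq.1
        rw [Prod.ext_iff, Prod.ext_iff]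
        refine ⟨by omega, by omega, by omega⟩
      have IH := ih (π.erase p) (Finset.erase_ssubset hp) hπ' m
      have hstep := step (p.1:ℤ) (p.2.1:ℤ) (p.2.2:ℤ) m
        (Int.natCast_nonneg _) (Int.natCast_nonneg _) (Int.natCast_nonneg _)
      rw [← Finset.insert_erase hp]
      simp only [cnt1_insert_tri (π.erase p) p hp', cnt2_insert (π.erase p) p hp']
      rw [hD π p hπ hp hπ' (m+1) (m+1) (m+1) (by omega),
        hD π p hπ hp hπ' m (m+1) (m+1) (by omega),
        hD π p hπ hp hπ' (m+1) m (m+1) (by omega),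
        hD π p hπ hp hπ' (m+1) (m+1) m (by omega),
        hD π p hπ hp hπ' m m (m+1) (by omega),
        hD π p hπ hp hπ' m (m+1) m (by omega),
        hD π p hπ hp hπ' (m+1) m m (by omega),
        hD π p hπ hp hπ' m m m (by omega)]
      linarith [IH, hstep]

end NoCY

open NoCY in
/-- **(Combinatorial content of Lemma 3.3 and Proposition 3.6.)** For every plane partition `π`
and every `m ∈ ℤ`, the coefficient of `t₁^m t₂^m t₃^m` (a power of the Calabi–Yau weight
`𝔱 = t₁t₂t₃`; in particular, for `m = 0`, the constant term) in the vertex term `V(π,π)`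
vanishes. -/
theorem no_power_of_CY_weight_in_vertex (π : Finset (ℕ × ℕ × ℕ)) (hπ : IsPlanePartition π)
    (m : ℤ) : vc π π (m, m, m) = 0 := by
  have h := vc_formula π (m, m, m)
  have c1 : ((-1,-1,-1) : ℤ×ℤ×ℤ) - (m,m,m) = (-1-m,-1-m,-1-m) := by
    rw [Prod.mk_sub_mk, Prod.mk_sub_mk]
  have c2 : ((m,m,m) : ℤ×ℤ×ℤ) - (-1,-1,-1) = (m+1,m+1,m+1) := by
    rw [Prod.mk_sub_mk, Prod.mk_sub_mk]; norm_num
  have c3 : ((m,m,m) : ℤ×ℤ×ℤ) - (0,-1,-1) = (m,m+1,m+1) := by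
    rw [Prod.mk_sub_mk, Prod.mk_sub_mk]; norm_num
  have c4 : ((m,m,m) : ℤ×ℤ×ℤ) - (-1,0,-1) = (m+1,m,m+1) := by
    rw [Prod.mk_sub_mk, Prod.mk_sub_mk]; norm_num
  have c5 : ((m,m,m) : ℤ×ℤ×ℤ) - (-1,-1,0) = (m+1,m+1,m) := by
    rw [Prod.mk_sub_mk, Prod.mk_sub_mk]; norm_num
  have c6 : ((m,m,m) : ℤ×ℤ×ℤ) - (0,0,-1) = (m,m,m+1) := by
    rw [Prod.mk_sub_mk, Prod.mk_sub_mk]; norm_num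
  have c7 : ((m,m,m) : ℤ×ℤ×ℤ) - (0,-1,0) = (m,m+1,m) := by
    rw [Prod.mk_sub_mk, Prod.mk_sub_mk]; norm_num
  have c8 : ((m,m,m) : ℤ×ℤ×ℤ) - (-1,0,0) = (m+1,m,m) := by
    rw [Prod.mk_sub_mk, Prod.mk_sub_mk]; norm_num
  have c9 : ((m,m,m) : ℤ×ℤ×ℤ) - (0,0,0) = (m,m,m) := by
    rw [Prod.mk_sub_mk, Prod.mk_sub_mk]; norm_num
  rw [h, c1, c2, c3, c4, c5, c6, c7, c8, c9]
  exact key π hπ m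
end

section
/- (Key identity in the proof of Theorem 6.2) Let K be a field, r ≥ 1 an integer, and u, q ∈ K nonzero elements with u² ≠ 1 and q ≠ u^{r−2i} for every integer 0 ≤ i ≤ r. Then Σ_{i=1}^{r} ((1 − u^{r−2i}q^{−1})(1 − u^{2i−r−2}q))^{−1} = (u^{r} − u^{−r}) / ((u − u^{−1}) · u^{r−1} · (1 − u^{−r}q^{−1})(1 − u^{−r}q)). -/
/-- **(Key identity in the proof of Theorem 6.2.)** Let `K` be a field, `r ≥ 1`, and
`u, q ∈ K` nonzero with `u² ≠ 1` and `q ≠ u^{r−2i}` for all integers `0 ≤ i ≤ r`. Then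
`Σ_{i=1}^{r} ((1 − u^{r−2i}q⁻¹)(1 − u^{2i−r−2}q))⁻¹
  = (u^r − u^{−r}) / ((u − u⁻¹)·u^{r−1}·(1 − u^{−r}q⁻¹)(1 − u^{−r}q))`. -/
theorem key_bracket_identity {K : Type*} [Field K] (r : ℕ) (hr : 1 ≤ r) (u q : K)
    (hu : u ≠ 0) (hq : q ≠ 0) (hu2 : u ^ 2 ≠ 1)
    (hqu : ∀ i : ℕ, i ≤ r → q ≠ u ^ ((r : ℤ) - 2 * i)) :
    ∑ i ∈ Finset.Icc 1 r,
        ((1 - u ^ ((r : ℤ) - 2 * i) * q⁻¹) * (1 - u ^ (2 * (i : ℤ) - r - 2) * q))⁻¹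
      = (u ^ (r : ℤ) - u ^ (-(r : ℤ))) /
          ((u - u⁻¹) * u ^ ((r : ℤ) - 1) *
            ((1 - u ^ (-(r : ℤ)) * q⁻¹) * (1 - u ^ (-(r : ℤ)) * q))) := by
  have hu2' : u ^ 2 - 1 ≠ 0 := sub_ne_zero.mpr hu2
  have ha : ∀ i : ℕ, i ≤ r → q - u ^ ((r : ℤ) - 2 * i) ≠ 0 :=
    fun i hi => sub_ne_zero.mpr (hqu i hi)
  set g : ℕ → K := fun i => u ^ ((r : ℤ) - 2 * i + 2) / (q - u ^ ((r : ℤ) - 2 * i)) with hg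
  have hterm : ∀ i ∈ Finset.Icc 1 r,
      ((1 - u ^ ((r : ℤ) - 2 * i) * q⁻¹) * (1 - u ^ (2 * (i : ℤ) - r - 2) * q))⁻¹
        = (g i - g (i - 1)) / (u ^ 2 - 1) := by
    intro i hi
    obtain ⟨h1, h2⟩ := Finset.mem_Icc.mp hi
    have hcast : ((i - 1 : ℕ) : ℤ) = (i : ℤ) - 1 := by omega
    set n : ℤ := (r : ℤ) - 2 * i with hn
    have e1 : (2 * (i : ℤ) - r - 2) = -n - 2 := by omega
    have e2 : ((r : ℤ) - 2 * ((i - 1 : ℕ) : ℤ)) = n + 2 := by rw [hcast]; ring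
    have e3 : ((r : ℤ) - 2 * ((i - 1 : ℕ) : ℤ) + 2) = n + 4 := by rw [hcast]; ring
    have e4 : ((r : ℤ) - 2 * (i : ℤ) + 2) = n + 2 := by omega
    have hvn : u ^ n ≠ 0 := zpow_ne_zero _ hu
    have z2 : u ^ ((2 : ℤ)) = u ^ 2 := by
      rw [show ((2 : ℤ)) = ((2 : ℕ) : ℤ) by norm_num, zpow_natCast]
    have hzz2 : u ^ (n + 2) = u ^ n * u ^ 2 := by rw [zpow_add₀ hu, z2]
    have hzz4 : u ^ (n + 4) = u ^ n * u ^ 2 * u ^ 2 := by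
      rw [show (n + 4 : ℤ) = (n + 2) + 2 by ring, zpow_add₀ hu, hzz2, z2]
    have hd1 : 1 - u ^ n * q⁻¹ ≠ 0 := by
      intro h
      apply hqu i h2
      have h' : u ^ n * q⁻¹ = 1 := by linear_combination -h
      field_simp at h'
      rw [← hn, h']
    have hd2 : 1 - u ^ (-n - 2) * q ≠ 0 := by
      intro h
      apply hqu (i - 1) (by omega)
      have h' : u ^ (-n - 2) * q = 1 := by linear_combination -h
      have hqq : q = u ^ (n + 2) := by
        have h2' : u ^ (n + 2) * (u ^ (-n - 2) * q) = u ^ (n + 2) * 1 := by rw [h']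
        rwa [← mul_assoc, ← zpow_add₀ hu, show (n + 2 + (-n - 2) : ℤ) = 0 by ring,
          zpow_zero, one_mul, mul_one] at h2'
      rw [e2]; exact hqq
    have hq1 : q - u ^ n ≠ 0 := by rw [hn]; exact ha i h2
    have hq2 : q - u ^ (n + 2) ≠ 0 := by rw [← e2]; exact ha (i - 1) (by omega)
    have hq2' : q - u ^ n * u ^ 2 ≠ 0 := by rw [← hzz2]; exact hq2
    have hd2' : 1 - (u ^ n * u ^ 2)⁻¹ * q ≠ 0 := by
      rw [← hzz2, ← zpow_neg, show (-(n + 2) : ℤ) = -n - 2 by ring]; exact hd2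
    have e3' : (n + 2 + 2 : ℤ) = n + 4 := by ring
    simp only [hg, e1, e2, e3, e3', e4]
    rw [show (-n - 2 : ℤ) = -(n + 2) by ring, zpow_neg, hzz2, hzz4]
    set v := u ^ n with hv
    have hvu : v * u ^ 2 - q ≠ 0 := by
      intro h; apply hq2'; linear_combination -h
    have hfac : (1 - v * q⁻¹) * (1 - (v * u ^ 2)⁻¹ * q)
        = (q - v) * (v * u ^ 2 - q) / (q * (v * u ^ 2)) := by
      field_simp
    rw [hfac, inv_div, div_eq_div_iff (mul_ne_zero hq1 hvu) hu2']
    field_simp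
    ring
  rw [Finset.sum_congr rfl hterm, ← Finset.sum_div]
  have htel : ∑ i ∈ Finset.Icc 1 r, (g i - g (i - 1)) = g r - g 0 := by
    rw [← Finset.Ico_add_one_right_eq_Icc, Finset.sum_Ico_eq_sum_range]
    simp only [Nat.add_sub_cancel, Nat.succ_sub_one]
    have : ∀ j ∈ Finset.range r, g (1 + j) - g (1 + j - 1) = g (j + 1) - g j := by
      intro j _
      congr 2 <;> omega
    rw [Finset.sum_congr rfl this, Finset.sum_range_sub]
  rw [htel]
  simp only [hg]
  have hwn : u ^ ((r : ℤ)) ≠ 0 := zpow_ne_zero _ hu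
  have e0 : ((r : ℤ) - 2 * ((0 : ℕ) : ℤ)) = (r : ℤ) := by simp
  have er : ((r : ℤ) - 2 * ((r : ℕ) : ℤ)) = -(r : ℤ) := by push_cast; ring
  have er2 : ((r : ℤ) - 2 * ((r : ℕ) : ℤ) + 2) = -(r : ℤ) + 2 := by push_cast; ring
  have e02 : ((r : ℤ) - 2 * ((0 : ℕ) : ℤ) + 2) = (r : ℤ) + 2 := by simp
  rw [er2, e02, e0, er]
  have hqr : q - u ^ (-(r : ℤ)) ≠ 0 := by rw [← er]; exact ha r le_rfl
  have hq0 : q - u ^ ((r : ℤ)) ≠ 0 := by rw [← e0]; exact ha 0 (by omega)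
  have hd1 : 1 - u ^ (-(r : ℤ)) * q⁻¹ ≠ 0 := by
    intro h
    apply hqu r le_rfl
    rw [er, zpow_neg, zpow_natCast]
    have h' : u ^ (-(r : ℤ)) * q⁻¹ = 1 := by linear_combination -h
    rw [zpow_neg, zpow_natCast] at h'
    have hur : (u ^ r : K) ≠ 0 := pow_ne_zero _ hu
    field_simp at h' ⊢
    linear_combination -h'
  have hd2 : 1 - u ^ (-(r : ℤ)) * q ≠ 0 := by
    intro h
    apply hqu 0 (by omega)
    have h' : u ^ (-(r : ℤ)) * q = 1 := by linear_combination -h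
    have hqq : q = u ^ ((r : ℤ)) := by
      have h2' : u ^ ((r : ℤ)) * (u ^ (-(r : ℤ)) * q) = u ^ ((r : ℤ)) * 1 := by rw [h']
      rwa [← mul_assoc, ← zpow_add₀ hu, show ((r : ℤ) + (-(r : ℤ)) : ℤ) = 0 by ring,
        zpow_zero, one_mul, mul_one] at h2'
    rw [e0]; exact hqq
  have huu : u - u⁻¹ ≠ 0 := by
    intro h
    apply hu2'
    have h' : u * (u - u⁻¹) = u ^ 2 - 1 := by field_simp
    rw [h, mul_zero] at h'
    exact h'.symm
  have z2 : u ^ ((2 : ℤ)) = u ^ 2 := by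
    rw [show ((2 : ℤ)) = ((2 : ℕ) : ℤ) by norm_num, zpow_natCast]
  have hz1 : u ^ (-(r : ℤ) + 2) = (u ^ ((r : ℤ)))⁻¹ * u ^ 2 := by
    rw [zpow_add₀ hu, zpow_neg, z2]
  have hz2 : u ^ ((r : ℤ) + 2) = u ^ ((r : ℤ)) * u ^ 2 := by rw [zpow_add₀ hu, z2]
  have hz3 : u ^ ((r : ℤ) - 1) = u ^ ((r : ℤ)) * u⁻¹ := by
    rw [zpow_sub₀ hu, zpow_one, div_eq_mul_inv]
  rw [hz1, hz2, hz3, zpow_neg]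
  have hqr' : q - (u ^ ((r : ℤ)))⁻¹ ≠ 0 := by rwa [zpow_neg] at hqr
  have hd1' : 1 - (u ^ ((r : ℤ)))⁻¹ * q⁻¹ ≠ 0 := by rwa [zpow_neg] at hd1
  have hd2' : 1 - (u ^ ((r : ℤ)))⁻¹ * q ≠ 0 := by rwa [zpow_neg] at hd2
  set w := u ^ ((r : ℤ)) with hw
  have hD : (u - u⁻¹) * (w * u⁻¹) * ((1 - w⁻¹ * q⁻¹) * (1 - w⁻¹ * q))
      = -((u ^ 2 - 1) * (q - w⁻¹) * (q - w)) / (q * u ^ 2) := by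
    field_simp
    ring
  rw [hD, div_div_eq_mul_div]
  have hneg : -((u ^ 2 - 1) * (q - w⁻¹) * (q - w)) ≠ 0 :=
    neg_ne_zero.mpr (mul_ne_zero (mul_ne_zero hu2' hqr') hq0)
  rw [div_eq_div_iff hu2' hneg]
  have hqw : q * w - 1 ≠ 0 := by
    intro h
    apply hqr'
    have : q - w⁻¹ = (q * w - 1) * w⁻¹ := by field_simp
    rw [this, h, zero_mul]
  have hqw' : -1 + q * w ≠ 0 := by intro h; apply hqw; linear_combination h
  have hqw'' : w * q - 1 ≠ 0 := by rwa [mul_comm] at hqw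
  field_simp [hqw, hqw', hqw'']
  ring
end

section
/- (Subtorus factor computed in the proof of Theorem 8.7) Let r ≥ 1 and k be integers, let g := gcd(r,k) (a positive integer, with gcd(r,0) = r), and let n ≥ 1. Let t_1, t_2, t_3 be nonzero complex numbers with t_1t_2t_3 = exp(2πik/r) and t_i^n ≠ 1 for i = 1,2,3. Then the product ((1−(t_1t_2)^{−n})(1−(t_1t_3)^{−n})(1−(t_2t_3)^{−n}))/((1−t_1^{−n})(1−t_2^{−n})(1−t_3^{−n})) · Σ_{j=0}^{r−1} (t_1t_2t_3)^{−nj} equals −r if r/g divides n, and equals 0 otherwise. -/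
lemma aux_dvd_iff (r K n : ℕ) (hr : 0 < r) : r ∣ K * n ↔ r / Nat.gcd r K ∣ n := by
  set g := Nat.gcd r K with hg
  have hgpos : 0 < g := Nat.gcd_pos_of_pos_left K hr
  have hrg : g * (r / g) = r := Nat.mul_div_cancel' (Nat.gcd_dvd_left r K)
  have hKg : g * (K / g) = K := Nat.mul_div_cancel' (Nat.gcd_dvd_right r K)
  constructor
  · intro h
    have h1 : g * (r / g) ∣ g * ((K / g) * n) := by
      rw [hrg, ← mul_assoc, hKg]; exact h
    have h2 : r / g ∣ (K / g) * n := (mul_dvd_mul_iff_left hgpos.ne').mp h1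
    exact (Nat.coprime_div_gcd_div_gcd hgpos).dvd_of_dvd_mul_left h2
  · intro h
    calc r = g * (r / g) := hrg.symm
    _ ∣ K * n := by
      obtain ⟨c, rfl⟩ := h
      rw [← hKg]; exact ⟨(K/g)*c, by ring⟩

lemma frac_lemma (a b c : ℂ) (ha : a ≠ 0) (hb : b ≠ 0) (hc : c ≠ 0)
    (h1 : a ≠ 1) (h2 : b ≠ 1) (h3 : c ≠ 1) (habc : a * b * c = 1) :
    ((1 - (a*b)⁻¹) * (1 - (a*c)⁻¹) * (1 - (b*c)⁻¹)) /
      ((1 - a⁻¹) * (1 - b⁻¹) * (1 - c⁻¹)) = -1 := by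
  have d1 : (1:ℂ) - a⁻¹ ≠ 0 := sub_ne_zero.mpr (fun h => h1 (inv_eq_one.mp h.symm))
  have d2 : (1:ℂ) - b⁻¹ ≠ 0 := sub_ne_zero.mpr (fun h => h2 (inv_eq_one.mp h.symm))
  have d3 : (1:ℂ) - c⁻¹ ≠ 0 := sub_ne_zero.mpr (fun h => h3 (inv_eq_one.mp h.symm))
  have hab : (a*b)⁻¹ = c := by field_simp; linear_combination (-1:ℂ) * habc
  have hac : (a*c)⁻¹ = b := by field_simp; linear_combination (-1:ℂ) * habc
  have hbc : (b*c)⁻¹ = a := by field_simp; linear_combination (-1:ℂ) * habc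
  rw [hab, hac, hbc, div_eq_iff (mul_ne_zero (mul_ne_zero d1 d2) d3)]
  field_simp
  linear_combination (-((a-1)*(b-1)*(c-1))) * habc


/-- **(Subtorus factor computed in the proof of Theorem 8.7.)** Let `r ≥ 1`, `k ∈ ℤ`,
`g = gcd(r,k)`, and `n ≥ 1`. Let `t₁, t₂, t₃` be nonzero complex numbers with
`t₁t₂t₃ = exp(2πik/r)` and `tᵢⁿ ≠ 1` for `i = 1,2,3`. Then
`((1−(t₁t₂)^{−n})(1−(t₁t₃)^{−n})(1−(t₂t₃)^{−n})) / ((1−t₁^{−n})(1−t₂^{−n})(1−t₃^{−n}))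
  · Σ_{j=0}^{r−1} (t₁t₂t₃)^{−nj}` equals `−r` if `r/g ∣ n`, and `0` otherwise. -/
theorem subtorus_plethystic_factor (r : ℕ) (hr : 1 ≤ r) (k : ℤ) (n : ℕ) (hn : 1 ≤ n)
    (t₁ t₂ t₃ : ℂ) (h₁ : t₁ ≠ 0) (h₂ : t₂ ≠ 0) (h₃ : t₃ ≠ 0)
    (ht : t₁ * t₂ * t₃ = Complex.exp (2 * (Real.pi : ℂ) * Complex.I * k / r))
    (hn₁ : t₁ ^ n ≠ 1) (hn₂ : t₂ ^ n ≠ 1) (hn₃ : t₃ ^ n ≠ 1) :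
    ((1 - (t₁ * t₂) ^ (-(n : ℤ))) * (1 - (t₁ * t₃) ^ (-(n : ℤ))) *
          (1 - (t₂ * t₃) ^ (-(n : ℤ)))) /
        ((1 - t₁ ^ (-(n : ℤ))) * (1 - t₂ ^ (-(n : ℤ))) * (1 - t₃ ^ (-(n : ℤ)))) *
        ∑ j ∈ Finset.range r, (t₁ * t₂ * t₃) ^ (-(n : ℤ) * j)
      = if r / Int.gcd (r : ℤ) k ∣ n then -(r : ℂ) else 0 := by
  have hr0 : (r : ℂ) ≠ 0 := Nat.cast_ne_zero.mpr (by omega)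
  set ζ : ℂ := t₁ * t₂ * t₃ with hζ
  have hζ0 : ζ ≠ 0 := mul_ne_zero (mul_ne_zero h₁ h₂) h₃
  have h2πI : (2 * (Real.pi : ℂ) * Complex.I) ≠ 0 := by
    simp [Real.pi_ne_zero, Complex.I_ne_zero]
  have hζr : ζ ^ r = 1 := by
    rw [ht, ← Complex.exp_nat_mul]
    have : (r : ℂ) * (2 * (Real.pi : ℂ) * Complex.I * k / r) = k * (2 * Real.pi * Complex.I) := by
      field_simp
    rw [this, Complex.exp_int_mul_two_pi_mul_I]
  have hnat : ∀ a : ℤ, (r : ℤ) ∣ (n : ℤ) * a ↔ r ∣ a.natAbs * n := by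
    intro a
    rw [← Int.natAbs_dvd_natAbs, Int.natAbs_mul]
    simp [Nat.mul_comm]
  -- characterize ζ ^ n = 1
  have hkey : ζ ^ n = 1 ↔ r / Int.gcd (r : ℤ) k ∣ n := by
    rw [ht, ← Complex.exp_nat_mul, Complex.exp_eq_one_iff]
    have iff2 : (∃ m : ℤ, (n : ℂ) * (2 * (Real.pi : ℂ) * Complex.I * k / r)
        = m * (2 * Real.pi * Complex.I)) ↔ (r : ℤ) ∣ (n : ℤ) * k := by
      constructor
      · rintro ⟨m, hm⟩
        have h' : (2 * (Real.pi : ℂ) * Complex.I) * ((n : ℂ) * k)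
            = (2 * (Real.pi : ℂ) * Complex.I) * ((m : ℂ) * r) := by
          field_simp at hm
          linear_combination (2 * (Real.pi : ℂ) * Complex.I) * hm
        have h'' := mul_left_cancel₀ h2πI h'
        have hz : (n : ℤ) * k = m * r := by exact_mod_cast h''
        exact ⟨m, by linarith⟩
      · rintro ⟨m, hm⟩
        refine ⟨m, ?_⟩
        have hc : ((n : ℤ) * k : ℂ) = (((r : ℤ) * m : ℤ) : ℂ) := by exact_mod_cast congrArg (Int.cast : ℤ → ℂ) hm
        push_cast at hc
        field_simp
        linear_combination hc
    rw [iff2, hnat k, Int.gcd]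
    simpa using aux_dvd_iff r k.natAbs n (by omega)
  have hterm : ∀ j : ℕ, ζ ^ (-(n:ℤ) * (j:ℤ)) = (ζ ^ (-(n:ℤ))) ^ j := fun j => by
    rw [zpow_mul, zpow_natCast]
  by_cases hd : r / Int.gcd (r : ℤ) k ∣ n
  · have hζn : ζ ^ n = 1 := hkey.mpr hd
    have hw : ζ ^ (-(n:ℤ)) = 1 := by rw [zpow_neg, zpow_natCast, hζn, inv_one]
    have hsum : ∑ j ∈ Finset.range r, ζ ^ (-(n:ℤ) * (j:ℤ)) = (r : ℂ) := by
      simp only [hterm, hw, one_pow, Finset.sum_const, Finset.card_range, nsmul_eq_mul, mul_one]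
    rw [if_pos hd, hsum]
    have habc : t₁ ^ n * t₂ ^ n * t₃ ^ n = 1 := by
      rw [← mul_pow, ← mul_pow]; exact hζn
    have hpows : ∀ u v : ℂ, (u * v) ^ (-(n:ℤ)) = (u ^ n * v ^ n)⁻¹ := fun u v => by
      rw [zpow_neg, zpow_natCast, mul_pow]
    have hpow1 : ∀ u : ℂ, u ^ (-(n:ℤ)) = (u ^ n)⁻¹ := fun u => by
      rw [zpow_neg, zpow_natCast]
    rw [hpows, hpows, hpows, hpow1, hpow1, hpow1,
      frac_lemma (t₁ ^ n) (t₂ ^ n) (t₃ ^ n) (pow_ne_zero n h₁) (pow_ne_zero n h₂)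
        (pow_ne_zero n h₃) hn₁ hn₂ hn₃ habc]
    ring
  · have hζn : ζ ^ n ≠ 1 := fun h => hd (hkey.mp h)
    have hw1 : ζ ^ (-(n:ℤ)) ≠ 1 := by
      rw [zpow_neg, zpow_natCast]
      exact fun h => hζn (by rw [← inv_inv (ζ ^ n), h, inv_one])
    have hwr : (ζ ^ (-(n:ℤ))) ^ r = 1 := by
      rw [← zpow_natCast (ζ ^ (-(n:ℤ))) r, ← zpow_mul, mul_comm, zpow_mul,
        zpow_natCast, hζr, one_zpow]
    have hsum : ∑ j ∈ Finset.range r, ζ ^ (-(n:ℤ) * (j:ℤ)) = 0 := by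
      simp_rw [hterm]
      rw [geom_sum_eq hw1, hwr, sub_self, zero_div]
    rw [if_neg hd, hsum, mul_zero]
end

section
/- (Unconditional K-theoretic content of Theorem 8.7, conjectured by Benini–Bonelli–Poggi–Tanzini) Let r ≥ 1 and k be integers, g := gcd(r,k). Let α_1, α_2, α_3 ∈ ℂ be nonzero, none of them a root of unity, with α_1α_2α_3 = exp(πik/r). For m ≥ 1 set A_m := (α_1α_2α_3)^{(1−r)m} · Σ_{j=0}^{r−1} (α_1α_2α_3)^{2jm}, B_m := (Π_{1≤i<j≤3} ((α_iα_j)^m − (α_iα_j)^{−m})) / (Π_{i=1}^{3} (α_i^m − α_i^{−m})), and G_m(q) := A_m · B_m · (−q^m)/(1 − (−1)^{km} q^m)² ∈ ℂ⟦q⟧. Then exp(Σ_{m≥1} (1/m)·G_m(q)) = Π_{n≥1} (1 − ((−1)^{kr} q^{r/g})^n)^{−gn} in ℂ⟦q⟧, both sides understood coefficientwise (for the coefficient of q^N only the finitely many m, n ≤ N contribute). -/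
/-- `A_m = (α₁α₂α₃)^{(1−r)m} · Σ_{j=0}^{r−1} (α₁α₂α₃)^{2jm}`, the regularised form of
`[𝔱^{rm}]/[𝔱^m]` with `α₁α₂α₃ = 𝔱^{1/2}`. -/
noncomputable def Aterm (α : Fin 3 → ℂ) (r m : ℕ) : ℂ :=
  (α 0 * α 1 * α 2) ^ ((1 - (r : ℤ)) * m) *
    ∑ j ∈ Finset.range r, (α 0 * α 1 * α 2) ^ (2 * (j : ℤ) * m)

/-- `B_m = Π_{i<j}((αᵢαⱼ)^m − (αᵢαⱼ)^{−m}) / Π_i (αᵢ^m − αᵢ^{−m})`. -/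
noncomputable def Bterm (α : Fin 3 → ℂ) (m : ℕ) : ℂ :=
  (((α 0 * α 1) ^ (m : ℤ) - (α 0 * α 1) ^ (-(m : ℤ))) *
      ((α 0 * α 2) ^ (m : ℤ) - (α 0 * α 2) ^ (-(m : ℤ))) *
      ((α 1 * α 2) ^ (m : ℤ) - (α 1 * α 2) ^ (-(m : ℤ)))) /
    ((α 0 ^ (m : ℤ) - α 0 ^ (-(m : ℤ))) * (α 1 ^ (m : ℤ) - α 1 ^ (-(m : ℤ))) *
      (α 2 ^ (m : ℤ) - α 2 ^ (-(m : ℤ))))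

/-- `G_m(q) = A_m · B_m · (−q^m)/(1 − (−1)^{km} q^m)² ∈ ℂ⟦q⟧`. -/
noncomputable def Gser (α : Fin 3 → ℂ) (r : ℕ) (k : ℤ) (m : ℕ) : PowerSeries ℂ :=
  PowerSeries.C (Aterm α r m * Bterm α m) * (-(PowerSeries.X ^ m)) *
    ((1 - PowerSeries.C ((-1 : ℂ) ^ (k * m)) * PowerSeries.X ^ m)⁻¹) ^ 2

/-- The formal exponential of a power series with zero constant term. -/
noncomputable def psExp {K : Type*} [Field K] (g : PowerSeries K) : PowerSeries K :=
  PowerSeries.mk fun N =>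
    ∑ k ∈ Finset.range (N + 1), (Nat.factorial k : K)⁻¹ * PowerSeries.coeff N (g ^ k)

namespace BBPTaux

open PowerSeries Finset

lemma coeff_psExp (g : PowerSeries ℂ) (N : ℕ) :
    coeff N (psExp g) =
      ∑ k ∈ range (N + 1), (Nat.factorial k : ℂ)⁻¹ * coeff N (g ^ k) := by
  simp [psExp]

lemma coeff_pow_eq_zero {f : PowerSeries ℂ} (hf : constantCoeff f = 0) {j M : ℕ}
    (h : M < j) : coeff M (f ^ j) = 0 := by
  obtain ⟨g, rfl⟩ := X_dvd_iff.mpr hf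
  rw [mul_pow, coeff_mul]
  refine Finset.sum_eq_zero fun p hp => ?_
  rw [coeff_X_pow, if_neg, zero_mul]
  rintro rfl
  exact absurd (mem_antidiagonal.mp hp) (by omega)

lemma coeff_pow_congr {f g : PowerSeries ℂ} {N : ℕ}
    (h : ∀ M ≤ N, coeff M f = coeff M g) (j : ℕ) :
    ∀ M ≤ N, coeff M (f ^ j) = coeff M (g ^ j) := by
  induction j with
  | zero => simp
  | succ j ih =>
      intro M hM
      rw [pow_succ, pow_succ, coeff_mul, coeff_mul]
      refine Finset.sum_congr rfl fun p hp => ?_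
      have hp' := mem_antidiagonal.mp hp
      rw [ih p.1 (by omega), h p.2 (by omega)]

lemma coeff_psExp_congr {f g : PowerSeries ℂ} {N : ℕ}
    (h : ∀ M ≤ N, coeff M f = coeff M g) :
    coeff N (psExp f) = coeff N (psExp g) := by
  rw [coeff_psExp, coeff_psExp]
  exact Finset.sum_congr rfl fun k _ => by rw [coeff_pow_congr h k N le_rfl]

lemma constantCoeff_psExp (g : PowerSeries ℂ) : constantCoeff (psExp g) = 1 := by
  have := coeff_psExp g 0
  rw [coeff_zero_eq_constantCoeff] at this
  simp at this
  simpa using this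

lemma psExp_zero : psExp (0 : PowerSeries ℂ) = 1 := by
  ext N
  rw [coeff_psExp]
  rcases Nat.eq_zero_or_pos N with rfl | hN
  · simp
  · rw [Finset.sum_eq_single 0]
    · rw [pow_zero, Nat.factorial_zero, coeff_one, if_neg (by omega)]
      simp
    · intro k _ hk
      rw [zero_pow hk, map_zero, mul_zero]
    · simp

lemma derivative_psExp {f : PowerSeries ℂ} (hf : constantCoeff f = 0) :
    d⁄dX ℂ (psExp f) = d⁄dX ℂ f * psExp f := by
  ext N
  rw [coeff_derivative, coeff_psExp, Finset.sum_mul]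
  have hstep : ∀ k : ℕ, coeff (N + 1) (f ^ k) * ((N : ℂ) + 1)
      = (k : ℂ) * coeff N (f ^ (k - 1) * d⁄dX ℂ f) := by
    intro k
    have h1 := coeff_derivative (f ^ k) N
    rw [Derivation.leibniz_pow, smul_eq_mul, map_nsmul, nsmul_eq_mul] at h1
    exact h1.symm
  calc ∑ k ∈ range (N + 1 + 1), (Nat.factorial k : ℂ)⁻¹ * coeff (N + 1) (f ^ k) * ((N : ℂ) + 1)
      = ∑ j ∈ range (N + 1),
          (Nat.factorial j : ℂ)⁻¹ * coeff N (f ^ j * d⁄dX ℂ f) := by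
        rw [Finset.sum_range_succ']
        simp only [mul_assoc, hstep]
        rw [Nat.cast_zero, zero_mul, mul_zero, add_zero]
        refine Finset.sum_congr rfl fun j _ => ?_
        rw [Nat.add_sub_cancel, Nat.factorial_succ, ← mul_assoc]
        congr 1
        push_cast
        rw [mul_inv]
        field_simp
    _ = coeff N (d⁄dX ℂ f * psExp f) := by
        rw [coeff_mul]
        have hin : ∀ p ∈ antidiagonal N,
            (coeff p.1) (d⁄dX ℂ f) * (coeff p.2) (psExp f)
              = ∑ j ∈ range (N + 1), (Nat.factorial j : ℂ)⁻¹ *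
                  ((coeff p.1) (d⁄dX ℂ f) * coeff p.2 (f ^ j)) := by
          intro p hp
          have hp' := mem_antidiagonal.mp hp
          rw [coeff_psExp, Finset.mul_sum]
          rw [Finset.sum_subset (Finset.range_subset_range.mpr (by omega : p.2 + 1 ≤ N + 1))]
          · exact Finset.sum_congr rfl fun j _ => by ring
          · intro j hj hj2
            simp only [Finset.mem_range, not_lt] at hj2
            rw [coeff_pow_eq_zero hf (by omega), mul_zero, mul_zero]
        rw [Finset.sum_congr rfl hin, Finset.sum_comm]
        refine Finset.sum_congr rfl fun j _ => ?_
        rw [← Finset.mul_sum, ← coeff_mul, mul_comm (f ^ j)]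

lemma eq_of_deriv {u v : PowerSeries ℂ}
    (hu : constantCoeff u = 1) (hv : constantCoeff v = 1)
    (h : d⁄dX ℂ u * v = d⁄dX ℂ v * u) : u = v := by
  ext N
  induction N using Nat.strong_induction_on with
  | _ N ih =>
    match N with
    | 0 => rw [coeff_zero_eq_constantCoeff_apply, hu, coeff_zero_eq_constantCoeff_apply, hv]
    | (M + 1) =>
      have hc := congrArg (coeff M) h
      rw [coeff_mul, coeff_mul] at hc
      have hmem : ((M, 0) : ℕ × ℕ) ∈ antidiagonal M := by simp
      rw [← Finset.sum_erase_add _ _ hmem, ← Finset.sum_erase_add _ _ hmem] at hc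
      have heq : ∀ p ∈ (antidiagonal M).erase (M, 0),
          (coeff p.1) (d⁄dX ℂ u) * (coeff p.2) v
            = (coeff p.1) (d⁄dX ℂ v) * (coeff p.2) u := by
        intro p hp
        obtain ⟨hne, hmem'⟩ := Finset.mem_erase.mp hp
        have hp' := mem_antidiagonal.mp hmem'
        have h2 : p.2 ≠ 0 := by
          intro h0
          exact hne (Prod.ext (by omega) h0)
        rw [coeff_derivative, coeff_derivative, ih (p.1 + 1) (by omega),
          ih p.2 (by omega)]
      rw [Finset.sum_congr rfl heq] at hc
      have hc2 := add_left_cancel hc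
      simp only [coeff_derivative, coeff_zero_eq_constantCoeff, hu, hv, mul_one] at hc2
      exact mul_right_cancel₀ (Nat.cast_add_one_ne_zero M) hc2

lemma psExp_add {f g : PowerSeries ℂ} (hf : constantCoeff f = 0)
    (hg : constantCoeff g = 0) : psExp (f + g) = psExp f * psExp g := by
  refine eq_of_deriv (constantCoeff_psExp _) (by
    rw [map_mul, constantCoeff_psExp, constantCoeff_psExp, mul_one]) ?_
  rw [derivative_psExp (by rw [map_add, hf, hg, add_zero]), Derivation.leibniz,
    smul_eq_mul, smul_eq_mul, derivative_psExp hf, derivative_psExp hg, map_add]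
  ring

lemma psExp_sum {ι : Type*} (s : Finset ι) (f : ι → PowerSeries ℂ)
    (h : ∀ i ∈ s, constantCoeff (f i) = 0) :
    psExp (∑ i ∈ s, f i) = ∏ i ∈ s, psExp (f i) := by
  induction s using Finset.cons_induction with
  | empty => simpa using psExp_zero
  | cons a s ha ih =>
      rw [Finset.sum_cons, Finset.prod_cons,
        psExp_add (h a (Finset.mem_cons_self a s))
          (by rw [map_sum]; exact Finset.sum_eq_zero fun i hi => h i (Finset.mem_cons_of_mem hi)),
        ih fun i hi => h i (Finset.mem_cons_of_mem hi)]

lemma psExp_nsmul {f : PowerSeries ℂ} (hf : constantCoeff f = 0) (n : ℕ) :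
    psExp (n • f) = psExp f ^ n := by
  induction n with
  | zero => simpa using psExp_zero
  | succ n ih =>
      rw [succ_nsmul, psExp_add (by rw [map_nsmul, hf, smul_zero]) hf, ih, pow_succ]

noncomputable def geomS (c : ℂ) (j : ℕ) : PowerSeries ℂ :=
  PowerSeries.mk fun M => if j ∣ M then c ^ (M / j) else 0

noncomputable def lseries (c : ℂ) (j : ℕ) : PowerSeries ℂ :=
  PowerSeries.mk fun M => if j ∣ M ∧ M ≠ 0 then c ^ (M / j) / ((M / j : ℕ) : ℂ) else 0

lemma constantCoeff_lseries (c : ℂ) (j : ℕ) : constantCoeff (lseries c j) = 0 := by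
  rw [← coeff_zero_eq_constantCoeff_apply, lseries, coeff_mk, if_neg (by simp)]

lemma one_sub_mul_geomS (c : ℂ) {j : ℕ} (hj : j ≠ 0) :
    (1 - C c * X ^ j) * geomS c j = 1 := by
  ext M
  rw [sub_mul, one_mul, map_sub, mul_assoc, coeff_C_mul, coeff_X_pow_mul', geomS, coeff_mk,
    coeff_one]
  by_cases hle : j ≤ M
  · rw [if_pos hle, coeff_mk]
    by_cases hdvd : j ∣ M
    · obtain ⟨d, rfl⟩ := hdvd
      have hd : d ≠ 0 := by rintro rfl; omega
      obtain ⟨e, rfl⟩ := Nat.exists_eq_succ_of_ne_zero hd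
      have hsub : j * (e + 1) - j = j * e := by rw [Nat.mul_succ]; omega
      rw [if_pos ⟨e + 1, rfl⟩, hsub, if_pos ⟨e, rfl⟩,
        Nat.mul_div_cancel_left _ (by omega : 0 < j),
        Nat.mul_div_cancel_left _ (by omega : 0 < j),
        if_neg (Nat.mul_ne_zero hj (Nat.succ_ne_zero e)), pow_succ]
      ring
    · rw [if_neg hdvd, if_neg (fun h2 => hdvd (by
        simpa [Nat.sub_add_cancel hle] using Nat.dvd_add h2 (dvd_refl j))),
        if_neg (by omega : ¬ M = 0)]
      ring
  · rw [if_neg hle]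
    rcases Nat.eq_zero_or_pos M with rfl | hM
    · rw [if_pos (dvd_zero j), if_pos rfl, Nat.zero_div, pow_zero]
      ring
    · rw [if_neg (fun h2 => hle (Nat.le_of_dvd hM h2)), if_neg (by omega : ¬ M = 0)]
      ring

lemma geomS_inv (c : ℂ) {j : ℕ} (hj : j ≠ 0) :
    (1 - C c * X ^ j)⁻¹ = geomS c j := by
  have hcc : constantCoeff (1 - C c * X ^ j) ≠ 0 := by
    rw [map_sub, map_one, map_mul, constantCoeff_C, map_pow, constantCoeff_X,
      zero_pow hj, mul_zero, sub_zero]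
    exact one_ne_zero
  rw [PowerSeries.inv_eq_iff_mul_eq_one hcc]
  rw [mul_comm]
  exact one_sub_mul_geomS c hj

lemma sum_range_ite_dvd {β : Type*} [AddCommMonoid β] {j : ℕ} (hj : j ≠ 0) (D : ℕ)
    (f : ℕ → β) :
    ∑ a ∈ Finset.range (j * D + 1), (if j ∣ a then f a else 0)
      = ∑ i ∈ Finset.range (D + 1), f (j * i) := by
  induction D with
  | zero => simp
  | succ D ih =>
      have hsucc : j * (D + 1) = j * D + j := Nat.mul_succ j D
      rw [Finset.sum_range_succ (fun i => f (j * i)) (D + 1), ← ih]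
      simp only [Finset.range_eq_Ico]
      rw [← Finset.sum_Ico_consecutive _ (by omega : 0 ≤ j * D + 1)
          (by omega : j * D + 1 ≤ j * (D + 1) + 1)]
      congr 1
      rw [Finset.sum_eq_single_of_mem (j * (D + 1)) (by rw [Finset.mem_Ico]; omega)]
      · rw [if_pos ⟨D + 1, rfl⟩]
      · intro b hb hne
        rw [Finset.mem_Ico] at hb
        rw [if_neg]
        rintro ⟨t, rfl⟩
        have h1 : ¬ t ≤ D := fun h => by
          have := Nat.mul_le_mul_left j h
          omega
        have h2 : ¬ D + 2 ≤ t := fun h => by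
          have h3 := Nat.mul_le_mul_left j h
          have h4 : j * (D + 2) = j * D + j + j := by rw [Nat.mul_succ, hsucc]
          omega
        have ht : t = D + 1 := by omega
        exact hne (by rw [ht])

lemma coeff_geomS_sq (c : ℂ) {j : ℕ} (hj : j ≠ 0) (M : ℕ) :
    coeff M (geomS c j ^ 2)
      = if j ∣ M then (((M / j : ℕ) : ℂ) + 1) * c ^ (M / j) else 0 := by
  rw [pow_two, coeff_mul, Finset.Nat.sum_antidiagonal_eq_sum_range_succ_mk]
  simp only [geomS, coeff_mk]
  by_cases hdvd : j ∣ M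
  · obtain ⟨D, rfl⟩ := hdvd
    rw [if_pos ⟨D, rfl⟩, Nat.mul_div_cancel_left _ (Nat.pos_of_ne_zero hj)]
    have hterm : ∀ a ∈ Finset.range (j * D + 1),
        (if j ∣ a then c ^ (a / j) else 0) *
            (if j ∣ j * D - a then c ^ ((j * D - a) / j) else 0)
          = if j ∣ a then c ^ D else 0 := by
      intro a ha
      rw [Finset.mem_range] at ha
      by_cases h : j ∣ a
      · obtain ⟨i, rfl⟩ := h
        have hiD : i ≤ D := by
          by_contra hc2
          have h5 : j * (D + 1) ≤ j * i := Nat.mul_le_mul_left j (by omega)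
          have h6 : j * (D + 1) = j * D + j := Nat.mul_succ j D
          omega
        have hsub : j * D - j * i = j * (D - i) := (Nat.mul_sub j D i).symm
        rw [if_pos ⟨i, rfl⟩, if_pos (by rw [hsub]; exact ⟨D - i, rfl⟩), if_pos ⟨i, rfl⟩,
          hsub, Nat.mul_div_cancel_left _ (Nat.pos_of_ne_zero hj),
          Nat.mul_div_cancel_left _ (Nat.pos_of_ne_zero hj), ← pow_add]
        congr 1
        omega
      · rw [if_neg h, if_neg h, zero_mul]
    rw [Finset.sum_congr rfl hterm, sum_range_ite_dvd hj D (fun _ => c ^ D),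
      Finset.sum_const, Finset.card_range, nsmul_eq_mul]
    push_cast
    ring
  · rw [if_neg hdvd]
    refine Finset.sum_eq_zero fun a ha => ?_
    rw [Finset.mem_range] at ha
    by_cases h : j ∣ a
    · have hna : ¬ j ∣ M - a := fun h2 => hdvd (by
        have h3 := Nat.dvd_add h h2
        rwa [Nat.add_sub_cancel' (by omega : a ≤ M)] at h3)
      rw [if_neg hna, mul_zero]
    · rw [if_neg h, zero_mul]

lemma coeff_derivative_lseries (c : ℂ) {j : ℕ} (hj : j ≠ 0) (M : ℕ) :
    coeff M (d⁄dX ℂ (lseries c j))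
      = if j ∣ (M + 1) then (j : ℂ) * c ^ ((M + 1) / j) else 0 := by
  rw [coeff_derivative, lseries, coeff_mk]
  by_cases h : j ∣ M + 1
  · rw [if_pos ⟨h, Nat.succ_ne_zero M⟩, if_pos h]
    obtain ⟨e, he⟩ := h
    have he' : (M + 1) / j = e := by rw [he, Nat.mul_div_cancel_left _ (Nat.pos_of_ne_zero hj)]
    have hecast : (M : ℂ) + 1 = (j : ℂ) * e := by exact_mod_cast congrArg (Nat.cast (R := ℂ)) he
    have hene : e ≠ 0 := by rintro rfl; omega
    have heneq : (e : ℂ) ≠ 0 := Nat.cast_ne_zero.mpr hene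
    rw [he', hecast]
    field_simp
  · rw [if_neg (fun h2 => h h2.1), if_neg h, zero_mul]

lemma derivative_lseries_mul (c : ℂ) {j : ℕ} (hj : j ≠ 0) :
    d⁄dX ℂ (lseries c j) * (1 - C c * X ^ j) = C ((j : ℂ) * c) * X ^ (j - 1) := by
  ext M
  have hre : d⁄dX ℂ (lseries c j) * (1 - C c * X ^ j)
      = d⁄dX ℂ (lseries c j) - C c * d⁄dX ℂ (lseries c j) * X ^ j := by ring
  rw [hre, map_sub, coeff_mul_X_pow', coeff_C_mul, coeff_C_mul, coeff_X_pow,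
    coeff_derivative_lseries c hj]
  by_cases hM : M = j - 1
  · subst hM
    have hj1 : j - 1 + 1 = j := by omega
    rw [hj1, if_pos dvd_rfl, Nat.div_self (Nat.pos_of_ne_zero hj),
      if_neg (by omega : ¬ j ≤ j - 1), if_pos rfl, pow_one]
    ring
  · rw [if_neg (show ¬ (M = j - 1) from hM), mul_zero]
    by_cases hle : j ≤ M
    · rw [if_pos hle, coeff_derivative_lseries c hj]
      by_cases hdvd : j ∣ M + 1
      · have hd2 : j ∣ M - j + 1 := by
          obtain ⟨e, he⟩ := hdvd
          exact ⟨e - 1, by rw [Nat.mul_sub]; omega⟩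
        rw [if_pos hdvd, if_pos hd2]
        obtain ⟨e, he⟩ := hdvd
        have he2 : 2 ≤ e := by
          rcases Nat.lt_or_ge e 2 with h2 | h2
          · interval_cases e <;> omega
          · exact h2
        have hq1 : (M + 1) / j = e := by rw [he, Nat.mul_div_cancel_left _ (Nat.pos_of_ne_zero hj)]
        have hq2 : (M - j + 1) / j = e - 1 := by
          rw [show M - j + 1 = j * (e - 1) by rw [Nat.mul_sub]; omega,
            Nat.mul_div_cancel_left _ (Nat.pos_of_ne_zero hj)]
        rw [hq1, hq2, show e = e - 1 + 1 by omega, pow_succ]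
        ring_nf
        rw [show 1 + (e - 1) - 1 = e - 1 by omega]
        ring
      · have hd2 : ¬ j ∣ M - j + 1 := fun h2 => hdvd (by
          obtain ⟨e, he⟩ := h2
          exact ⟨e + 1, by rw [Nat.mul_add]; omega⟩)
        rw [if_neg hdvd, if_neg hd2, mul_zero]
        ring
    · have hdvd : ¬ j ∣ M + 1 := by
        intro h2
        have := Nat.le_of_dvd (Nat.succ_pos M) h2
        omega
      rw [if_neg hdvd, if_neg hle]
      ring

lemma psExp_lseries (c : ℂ) {j : ℕ} (hj : j ≠ 0) :
    psExp (lseries c j) = (1 - C c * X ^ j)⁻¹ := by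
  set w : PowerSeries ℂ := 1 - C c * X ^ j with hw
  have hcc : constantCoeff w = 1 := by
    rw [hw, map_sub, map_one, map_mul, constantCoeff_C, map_pow, constantCoeff_X,
      zero_pow hj, mul_zero, sub_zero]
  have hwv : w * w⁻¹ = 1 := PowerSeries.mul_inv_cancel _ (by rw [hcc]; exact one_ne_zero)
  refine eq_of_deriv (constantCoeff_psExp _)
    (by rw [PowerSeries.constantCoeff_inv, hcc, inv_one]) ?_
  rw [derivative_psExp (constantCoeff_lseries c j), PowerSeries.derivative_inv']
  have hDL : d⁄dX ℂ (lseries c j) = C ((j : ℂ) * c) * X ^ (j - 1) * w⁻¹ := by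
    rw [← derivative_lseries_mul c hj, mul_assoc, ← hw, hwv, mul_one]
  have hDw : d⁄dX ℂ w = -(C ((j : ℂ) * c) * X ^ (j - 1)) := by
    rw [hw, map_sub, Derivation.map_one_eq_zero, zero_sub, Derivation.leibniz,
      PowerSeries.derivative_C, smul_zero, add_zero, Derivation.leibniz_pow,
      PowerSeries.derivative_X, smul_eq_mul, smul_eq_mul]
    rw [mul_one, nsmul_eq_mul, ← map_natCast C j, map_mul]
    ring
  rw [hDL, hDw]
  ring

lemma dvd_iff_gcd {r : ℕ} (hr : r ≠ 0) (k : ℤ) (m : ℕ) :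
    (r : ℤ) ∣ k * m ↔ (r / Int.gcd (r : ℤ) k) ∣ m := by
  have hg : Int.gcd (r : ℤ) k = Nat.gcd r k.natAbs := by
    rw [Int.gcd]
    simp
  set g := Nat.gcd r k.natAbs with hgdef
  have hgr : g ∣ r := Nat.gcd_dvd_left r k.natAbs
  have hgk : g ∣ k.natAbs := Nat.gcd_dvd_right r k.natAbs
  have hgne : g ≠ 0 := fun h => hr (Nat.eq_zero_of_gcd_eq_zero_left h)
  have hgpos : 0 < g := Nat.pos_of_ne_zero hgne
  have hco : Nat.Coprime (r / g) (k.natAbs / g) := Nat.coprime_div_gcd_div_gcd hgpos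
  have h1 : (r : ℤ) ∣ k * m ↔ r ∣ k.natAbs * m := by
    rw [Int.natCast_dvd, Int.natAbs_mul, Int.natAbs_natCast]
  rw [h1, hg]
  have hrg : g * (r / g) = r := Nat.mul_div_cancel' hgr
  have hkg : g * (k.natAbs / g) = k.natAbs := Nat.mul_div_cancel' hgk
  constructor
  · intro h
    have h2 : g * (r / g) ∣ g * ((k.natAbs / g) * m) := by
      rw [hrg, ← mul_assoc, hkg]
      exact h
    have h3 : (r / g) ∣ (k.natAbs / g) * m := (mul_dvd_mul_iff_left hgne).mp h2
    exact hco.dvd_of_dvd_mul_right (by rwa [mul_comm] at h3)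
  · intro h
    have h2 : (r / g) ∣ (k.natAbs / g) * m := Dvd.dvd.mul_left h (k.natAbs / g)
    have h3 : g * (r / g) ∣ g * ((k.natAbs / g) * m) := mul_dvd_mul_left g h2
    rwa [hrg, ← mul_assoc, hkg] at h3

lemma neg_one_zpow_sq (n : ℤ) : ((-1 : ℂ) ^ n) * ((-1 : ℂ) ^ n) = 1 := by
  rw [← zpow_add₀ (by norm_num : (-1 : ℂ) ≠ 0)]
  rcases Int.even_or_odd n with he | ho
  · exact Even.neg_one_zpow ⟨n, two_mul n ▸ rfl⟩
  · exact Even.neg_one_zpow ⟨n, two_mul n ▸ rfl⟩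

lemma AB_eval {r : ℕ} (hr : 1 ≤ r) (k : ℤ) (α : Fin 3 → ℂ)
    (hα0 : ∀ i, α i ≠ 0) (hαru : ∀ i, ∀ m : ℕ, m ≠ 0 → α i ^ m ≠ 1)
    (hprod : α 0 * α 1 * α 2 = Complex.exp ((Real.pi : ℂ) * Complex.I * k / r))
    {m : ℕ} (hm : m ≠ 0) :
    Aterm α r m * Bterm α m
      = if (r / Int.gcd (r : ℤ) k) ∣ m
        then -(r : ℂ) * (-1 : ℂ) ^ (k * (m : ℤ)) else 0 := by
  have hrne : (r : ℂ) ≠ 0 := Nat.cast_ne_zero.mpr (by omega)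
  set z : ℂ := (Real.pi : ℂ) * Complex.I * k / r with hz
  set t : ℂ := α 0 * α 1 * α 2 with ht
  have htz : ∀ n : ℤ, t ^ n = Complex.exp (n * z) := fun n => by
    rw [hprod]; exact (Complex.exp_int_mul z n).symm
  have htne : t ≠ 0 := by rw [hprod]; exact Complex.exp_ne_zero _
  have hpiI : ((Real.pi : ℂ) * Complex.I) ≠ 0 :=
    mul_ne_zero (Complex.ofReal_ne_zero.mpr Real.pi_ne_zero) Complex.I_ne_zero
  have key1 : t ^ (2 * (r : ℤ)) = 1 := by
    rw [htz]
    have : ((2 * (r : ℤ) : ℤ) : ℂ) * z = (k : ℂ) * (2 * (Real.pi : ℂ) * Complex.I) := by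
      rw [hz]
      push_cast
      field_simp
    rw [this]
    exact Complex.exp_int_mul_two_pi_mul_I k
  by_cases hdv : (r / Int.gcd (r : ℤ) k) ∣ m
  · rw [if_pos hdv]
    obtain ⟨s, hs⟩ : (r : ℤ) ∣ k * m := (dvd_iff_gcd (by omega) k m).mpr hdv
    have key2 : t ^ (2 * (m : ℤ)) = 1 := by
      rw [htz]
      have : ((2 * (m : ℤ) : ℤ) : ℂ) * z = (s : ℂ) * (2 * (Real.pi : ℂ) * Complex.I) := by
        rw [hz]
        have hsc : (k : ℂ) * m = (r : ℂ) * s := by exact_mod_cast congrArg Int.cast hs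
        push_cast
        field_simp
        linear_combination hsc
      rw [this]
      exact Complex.exp_int_mul_two_pi_mul_I s
    set ε : ℂ := t ^ (m : ℤ) with hε
    have hεsq : ε * ε = 1 := by
      rw [hε, ← zpow_add₀ htne]
      rw [show (m : ℤ) + m = 2 * (m : ℤ) by ring]
      exact key2
    have hεinv : ε⁻¹ = ε := inv_eq_of_mul_eq_one_right hεsq
    have hεne : ε ≠ 0 := zpow_ne_zero _ htne
    -- Aterm
    have hsum : ∑ j ∈ Finset.range r, t ^ (2 * (j : ℤ) * m) = (r : ℂ) := by
      rw [Finset.sum_congr rfl (fun j _ => by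
        rw [show 2 * (j : ℤ) * m = 2 * (m : ℤ) * j by ring, zpow_mul, key2, one_zpow])]
      simp
    have hA : Aterm α r m = t ^ ((1 - (r : ℤ)) * m) * r := by
      unfold Aterm
      rw [← ht, hsum]
    -- Bterm
    have hden : ∀ i : Fin 3, α i ^ (m : ℤ) - α i ^ (-(m : ℤ)) ≠ 0 := by
      intro i
      rw [sub_ne_zero]
      intro heq
      have h2 : α i ^ (m : ℤ) * α i ^ (m : ℤ) = 1 := by
        nth_rewrite 2 [heq]
        rw [← zpow_add₀ (hα0 i), add_neg_cancel, zpow_zero]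
      have h3 : α i ^ (2 * m) = 1 := by
        rw [← zpow_natCast (α i) (2 * m)]
        push_cast
        rw [two_mul, zpow_add₀ (hα0 i)]
        exact h2
      exact hαru i (2 * m) (by omega) h3
    have hfac : ∀ i : Fin 3, t * (α i)⁻¹ ≠ 0 := fun i =>
      mul_ne_zero htne (inv_ne_zero (hα0 i))
    have hnum : ∀ i : Fin 3,
        (t * (α i)⁻¹) ^ (m : ℤ) - (t * (α i)⁻¹) ^ (-(m : ℤ))
          = -(ε * (α i ^ (m : ℤ) - α i ^ (-(m : ℤ)))) := by
      intro i
      have e1 : (t * (α i)⁻¹) ^ (m : ℤ) = ε * (α i ^ (m : ℤ))⁻¹ := by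
        rw [mul_zpow, inv_zpow, hε]
      have e2 : (t * (α i)⁻¹) ^ (-(m : ℤ)) = ε * α i ^ (m : ℤ) := by
        rw [mul_zpow, inv_zpow, zpow_neg, zpow_neg, inv_inv, ← hε, hεinv]
      rw [e1, e2, zpow_neg]
      ring
    have h01 : α 0 * α 1 = t * (α 2)⁻¹ := by
      rw [ht, mul_inv_cancel_right₀ (hα0 2)]
    have h02 : α 0 * α 2 = t * (α 1)⁻¹ := by
      rw [ht, show α 0 * α 1 * α 2 = α 0 * α 2 * α 1 by ring,
        mul_inv_cancel_right₀ (hα0 1)]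
    have h12 : α 1 * α 2 = t * (α 0)⁻¹ := by
      rw [ht, show α 0 * α 1 * α 2 = α 1 * α 2 * α 0 by ring,
        mul_inv_cancel_right₀ (hα0 0)]
    have hd : (α 0 ^ (m : ℤ) - α 0 ^ (-(m : ℤ))) * (α 1 ^ (m : ℤ) - α 1 ^ (-(m : ℤ))) *
        (α 2 ^ (m : ℤ) - α 2 ^ (-(m : ℤ))) ≠ 0 :=
      mul_ne_zero (mul_ne_zero (hden 0) (hden 1)) (hden 2)
    have hB : Bterm α m = -ε := by
      unfold Bterm
      rw [h01, h02, h12, hnum 2, hnum 1, hnum 0, div_eq_iff hd]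
      have hcube : ε * ε * ε = ε := by rw [hεsq, one_mul]
      linear_combination (-((α 0 ^ (m : ℤ) - α 0 ^ (-(m : ℤ))) *
        (α 1 ^ (m : ℤ) - α 1 ^ (-(m : ℤ))) * (α 2 ^ (m : ℤ) - α 2 ^ (-(m : ℤ))))) * hcube
    rw [hA, hB]
    -- -(r) * t^{(1-r)m} * ε = -r * (-1)^{km}
    have hkey : t ^ ((1 - (r : ℤ)) * m) * ε = (-1 : ℂ) ^ (k * (m : ℤ)) := by
      rw [hε, ← zpow_add₀ htne]
      have hexp : (1 - (r : ℤ)) * m + m = 2 * m + (-((r : ℤ) * m)) := by ring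
      rw [hexp, zpow_add₀ htne, key2, one_mul, zpow_neg, zpow_mul, htz]
      have hzr : ((r : ℤ) : ℂ) * z = (k : ℂ) * ((Real.pi : ℂ) * Complex.I) := by
        rw [hz]
        push_cast
        field_simp
      rw [hzr, Complex.exp_int_mul, Complex.exp_pi_mul_I, ← zpow_mul, ← zpow_neg]
      rw [zpow_neg, inv_eq_of_mul_eq_one_right (neg_one_zpow_sq (k * (m : ℤ)))]
    calc t ^ ((1 - (r : ℤ)) * m) * (r : ℂ) * -ε
        = -(r : ℂ) * (t ^ ((1 - (r : ℤ)) * m) * ε) := by ring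
      _ = -(r : ℂ) * (-1 : ℂ) ^ (k * (m : ℤ)) := by rw [hkey]
  · rw [if_neg hdv]
    have hndvd : ¬ (r : ℤ) ∣ k * m := fun h => hdv ((dvd_iff_gcd (by omega) k m).mp h)
    set x : ℂ := t ^ (2 * (m : ℤ)) with hx
    have hx1 : x ≠ 1 := by
      rw [hx, htz]
      intro hxe
      obtain ⟨n, hn⟩ := Complex.exp_eq_one_iff.mp hxe
      apply hndvd
      refine ⟨n, ?_⟩
      have hc : ((k * m : ℤ) : ℂ) = ((r * n : ℤ) : ℂ) := by
        push_cast
        rw [hz] at hn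
        push_cast at hn
        field_simp at hn
        have h2 : (2 : ℂ) * Real.pi * Complex.I ≠ 0 := by
          intro h0
          apply hpiI
          linear_combination h0 / 2
        apply mul_left_cancel₀ h2
        linear_combination (2 * (Real.pi : ℂ) * Complex.I) * hn
      exact_mod_cast hc
    have hxr : x ^ r = 1 := by
      rw [hx, ← zpow_natCast, ← zpow_mul,
        show 2 * (m : ℤ) * r = 2 * (r : ℤ) * m by ring, zpow_mul, key1, one_zpow]
    have hsum : ∑ j ∈ Finset.range r, t ^ (2 * (j : ℤ) * m) = 0 := by
      rw [Finset.sum_congr rfl (fun j _ => by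
        rw [show 2 * (j : ℤ) * m = 2 * (m : ℤ) * j by ring, zpow_mul, zpow_natCast, ← hx])]
      rw [geom_sum_eq hx1, hxr, sub_self, zero_div]
    unfold Aterm
    rw [← ht, hsum, mul_zero, zero_mul]

lemma coeff_Gser {r : ℕ} (hr : 1 ≤ r) (k : ℤ) (α : Fin 3 → ℂ)
    (hα0 : ∀ i, α i ≠ 0) (hαru : ∀ i, ∀ m : ℕ, m ≠ 0 → α i ^ m ≠ 1)
    (hprod : α 0 * α 1 * α 2 = Complex.exp ((Real.pi : ℂ) * Complex.I * k / r))
    {m : ℕ} (hm : m ≠ 0) (M : ℕ) :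
    coeff M (Gser α r k m)
      = if (r / Int.gcd (r : ℤ) k) ∣ m ∧ m ∣ M ∧ M ≠ 0
        then (r : ℂ) * ((M / m : ℕ) : ℂ) * (-1 : ℂ) ^ (k * (M : ℤ)) else 0 := by
  unfold Gser
  rw [AB_eval hr k α hα0 hαru hprod hm]
  by_cases h1 : (r / Int.gcd (r : ℤ) k) ∣ m
  · rw [if_pos h1, geomS_inv _ hm]
    set c : ℂ := (-1 : ℂ) ^ (k * (m : ℤ)) with hc
    have hser : C (-(r : ℂ) * c) * (-(X ^ m)) * geomS c m ^ 2
        = C ((r : ℂ) * c) * (geomS c m ^ 2 * X ^ m) := by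
      rw [show (-(r : ℂ) * c) = -((r : ℂ) * c) by ring, map_neg]
      ring
    rw [hser, coeff_C_mul, coeff_mul_X_pow', coeff_geomS_sq c hm]
    by_cases h2 : m ≤ M
    · rw [if_pos h2]
      by_cases h3 : m ∣ M
      · have h4 : m ∣ M - m := Nat.dvd_sub h3 dvd_rfl
        rw [if_pos h4, if_pos ⟨h1, h3, by omega⟩]
        obtain ⟨d, rfl⟩ := h3
        have hd1 : 1 ≤ d := by
          rcases Nat.eq_zero_or_pos d with rfl | h
          · omega
          · exact h
        have hmpos : 0 < m := by omega
        have e1 : (m * d - m) / m = d - 1 := by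
          rw [show m * d - m = m * (d - 1) by rw [Nat.mul_sub]; omega,
            Nat.mul_div_cancel_left _ hmpos]
        have e2 : m * d / m = d := Nat.mul_div_cancel_left _ hmpos
        rw [e1, e2]
        have h6 : c * c ^ (d - 1) = (-1 : ℂ) ^ (k * ((m * d : ℕ) : ℤ)) := by
          rw [← pow_succ', show d - 1 + 1 = d by omega, hc, ← zpow_natCast ((-1 : ℂ) ^ (k * (m : ℤ))) d,
            ← zpow_mul]
          congr 1
          push_cast
          ring
        rw [Nat.cast_sub hd1, Nat.cast_one]
        linear_combination ((r : ℂ) * (d : ℂ)) * h6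
      · have h4 : ¬ m ∣ M - m := fun hdd => h3 (by
          have h5 := Nat.dvd_add hdd (dvd_refl m)
          rwa [Nat.sub_add_cancel h2] at h5)
        rw [if_neg h4, mul_zero, if_neg (fun h => h.2.1.elim (fun _ => by tauto))]
    · rw [if_neg h2, mul_zero, if_neg]
      rintro ⟨-, h3, h4⟩
      exact h2 (Nat.le_of_dvd (by omega) h3)
  · rw [if_neg h1, map_zero, zero_mul, zero_mul, map_zero, if_neg (fun h => h1 h.1)]

lemma eps_pow_eq {r : ℕ} (hr : r ≠ 0) (k : ℤ) (M' : ℕ) :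
    (-1 : ℂ) ^ (k * (((r / Int.gcd (r : ℤ) k) * M' : ℕ) : ℤ))
      = ((-1 : ℂ) ^ (k * (r : ℤ))) ^ M' := by
  set g := Int.gcd (r : ℤ) k with hg
  have hgdvd : (g : ℤ) ∣ k := Int.gcd_dvd_right _ _
  have hgr : g ∣ r := by
    have h0 := Int.gcd_dvd_left (a := (r : ℤ)) (b := k)
    exact_mod_cast h0
  have hgne : g ≠ 0 := fun h0 => hr (by exact_mod_cast (Int.gcd_eq_zero_iff.mp h0).1)
  set r2 := r / g with hr2
  have hrr : g * r2 = r := Nat.mul_div_cancel' hgr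
  rw [← zpow_natCast ((-1 : ℂ) ^ (k * (r : ℤ))) M', ← zpow_mul]
  set a : ℤ := k * ((r2 * M' : ℕ) : ℤ) with ha
  have hb : k * (r : ℤ) * (M' : ℤ) = (g : ℤ) * a := by
    rw [ha, ← hrr]
    push_cast
    ring
  rw [hb]
  rcases Int.even_or_odd a with hae | hao
  · rw [Even.neg_one_zpow hae, Even.neg_one_zpow (hae.mul_left _)]
  · have hgo : Odd (g : ℤ) := by
      rcases Int.even_or_odd (g : ℤ) with hge | hgo
      · exfalso
        have hke : Even k := by
          obtain ⟨d, hd⟩ := hgdvd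
          obtain ⟨c2, hc2⟩ := hge
          exact ⟨c2 * d, by rw [hd, hc2]; ring⟩
        have hea : Even a := by rw [ha]; exact hke.mul_right _
        exact (Int.not_odd_iff_even.mpr hea) hao
      · exact hgo
    rw [Odd.neg_one_zpow hao, Odd.neg_one_zpow (hgo.mul hao)]

lemma coeff_F_eq {r : ℕ} (hr : 1 ≤ r) (k : ℤ) (α : Fin 3 → ℂ)
    (hα0 : ∀ i, α i ≠ 0) (hαru : ∀ i, ∀ m : ℕ, m ≠ 0 → α i ^ m ≠ 1)
    (hprod : α 0 * α 1 * α 2 = Complex.exp ((Real.pi : ℂ) * Complex.I * k / r))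
    {N M : ℕ} (hMN : M ≤ N) :
    coeff M (PowerSeries.mk fun M' =>
        ∑ m ∈ Finset.Icc 1 M', (m : ℂ)⁻¹ * coeff M' (Gser α r k m))
      = coeff M (∑ n ∈ Finset.Icc 1 N, (Int.gcd (r : ℤ) k * n) •
          lseries (((-1 : ℂ) ^ (k * (r : ℤ))) ^ n) ((r / Int.gcd (r : ℤ) k) * n)) := by
  set g := Int.gcd (r : ℤ) k with hg
  set r' := r / g with hr'def
  set ε : ℂ := (-1 : ℂ) ^ (k * (r : ℤ)) with hε
  set u : ℂ := (-1 : ℂ) ^ (k * (M : ℤ)) with hu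
  have hgr : g ∣ r := by
    have h0 := Int.gcd_dvd_left (a := (r : ℤ)) (b := k)
    exact_mod_cast h0
  have hgne : g ≠ 0 := fun h0 => by
    have h1 := (Int.gcd_eq_zero_iff.mp h0).1
    have : r = 0 := by exact_mod_cast h1
    omega
  have hrg : g * r' = r := Nat.mul_div_cancel' hgr
  have hr'ne : r' ≠ 0 := by rintro h0; rw [h0, mul_zero] at hrg; omega
  rw [coeff_mk, map_sum]
  have hRHSterm : ∀ n : ℕ, coeff M ((g * n) • lseries (ε ^ n) (r' * n))
      = ((g * n : ℕ) : ℂ) * (if (r' * n) ∣ M ∧ M ≠ 0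
          then (ε ^ n) ^ (M / (r' * n)) / ((M / (r' * n) : ℕ) : ℂ) else 0) := by
    intro n
    rw [map_nsmul, nsmul_eq_mul]
    unfold lseries
    rw [coeff_mk]
  have hLHSterm : ∀ m ∈ Finset.Icc 1 M, (m : ℂ)⁻¹ * coeff M (Gser α r k m)
      = (m : ℂ)⁻¹ * (if r' ∣ m ∧ m ∣ M ∧ M ≠ 0
          then (r : ℂ) * ((M / m : ℕ) : ℂ) * u else 0) := by
    intro m hm
    rw [coeff_Gser hr k α hα0 hαru hprod (by have := (Finset.mem_Icc.mp hm).1; omega) M]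
  rw [Finset.sum_congr rfl hLHSterm, Finset.sum_congr rfl (fun n _ => hRHSterm n)]
  rcases Nat.eq_zero_or_pos M with rfl | hMpos
  · rw [show Finset.Icc 1 0 = (∅ : Finset ℕ) from rfl, Finset.sum_empty]
    refine (Finset.sum_eq_zero fun n _ => ?_).symm
    rw [if_neg (fun h => h.2 rfl), mul_zero]
  by_cases hdM : r' ∣ M
  · obtain ⟨M', hM'⟩ := hdM
    have hM'ne : M' ≠ 0 := by rintro rfl; omega
    have hMdiv : M / r' = M' := by
      rw [hM', Nat.mul_div_cancel_left _ (Nat.pos_of_ne_zero hr'ne)]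
    have hLzero : ∀ m ∈ Finset.Icc 1 M, m ∉ (M'.divisors).image (fun n => r' * n) →
        ((m : ℂ)⁻¹ * (if r' ∣ m ∧ m ∣ M ∧ M ≠ 0
          then (r : ℂ) * ((M / m : ℕ) : ℂ) * u else 0)) = 0 := by
      intro m hm hnot
      rw [if_neg, mul_zero]
      rintro ⟨ha, hb, -⟩
      apply hnot
      obtain ⟨q, rfl⟩ := ha
      refine Finset.mem_image.mpr ⟨q, Nat.mem_divisors.mpr ⟨?_, hM'ne⟩, rfl⟩
      rw [hM'] at hb
      exact (mul_dvd_mul_iff_left hr'ne).mp hb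
    have hLsub : (M'.divisors).image (fun n => r' * n) ⊆ Finset.Icc 1 M := by
      intro m hm
      obtain ⟨q, hq, rfl⟩ := Finset.mem_image.mp hm
      obtain ⟨hq1, -⟩ := Nat.mem_divisors.mp hq
      have hq0 : q ≠ 0 := by rintro rfl; exact hM'ne (Nat.eq_zero_of_zero_dvd hq1)
      have hdvdM : r' * q ∣ M := by rw [hM']; exact mul_dvd_mul_left r' hq1
      exact Finset.mem_Icc.mpr ⟨by
        have := Nat.pos_of_ne_zero hr'ne
        have := Nat.pos_of_ne_zero hq0
        exact Nat.one_le_iff_ne_zero.mpr (Nat.mul_ne_zero hr'ne hq0),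
        Nat.le_of_dvd hMpos hdvdM⟩
    rw [← Finset.sum_subset hLsub hLzero, Finset.sum_image
      (fun a _ b _ h => Nat.eq_of_mul_eq_mul_left (Nat.pos_of_ne_zero hr'ne) h)]
    have hRzero : ∀ n ∈ Finset.Icc 1 N, n ∉ M'.divisors →
        (((g * n : ℕ) : ℂ) * (if (r' * n) ∣ M ∧ M ≠ 0
          then (ε ^ n) ^ (M / (r' * n)) / ((M / (r' * n) : ℕ) : ℂ) else 0)) = 0 := by
      intro n hn hnot
      rw [if_neg, mul_zero]
      rintro ⟨ha, -⟩
      apply hnot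
      refine Nat.mem_divisors.mpr ⟨?_, hM'ne⟩
      rw [hM'] at ha
      exact (mul_dvd_mul_iff_left hr'ne).mp (dvd_trans (mul_dvd_mul_left r' (dvd_refl n)) ha)
    have hRsub : M'.divisors ⊆ Finset.Icc 1 N := by
      intro n hn
      obtain ⟨hn1, -⟩ := Nat.mem_divisors.mp hn
      have hn0 : n ≠ 0 := by rintro rfl; exact hM'ne (Nat.eq_zero_of_zero_dvd hn1)
      have hnM' : n ≤ M' := Nat.le_of_dvd (Nat.pos_of_ne_zero hM'ne) hn1
      have hM'M : M' ≤ M := by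
        rw [hM']
        exact Nat.le_mul_of_pos_left M' (Nat.pos_of_ne_zero hr'ne)
      exact Finset.mem_Icc.mpr ⟨Nat.one_le_iff_ne_zero.mpr hn0, by omega⟩
    rw [← Finset.sum_subset hRsub hRzero]
    have hMr'n : ∀ n, n ∣ M' → M / (r' * n) = M' / n := fun n hn => by
      rw [← Nat.div_div_eq_div_mul, hMdiv]
    have hLn : ∀ n ∈ M'.divisors,
        ((r' * n : ℕ) : ℂ)⁻¹ * (if r' ∣ r' * n ∧ r' * n ∣ M ∧ M ≠ 0
          then (r : ℂ) * ((M / (r' * n) : ℕ) : ℂ) * u else 0)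
          = (g : ℂ) * u * (((M' / n : ℕ) : ℂ) * ((n : ℕ) : ℂ)⁻¹) := by
      intro n hn
      obtain ⟨hn1, -⟩ := Nat.mem_divisors.mp hn
      have hn0 : n ≠ 0 := by rintro rfl; exact hM'ne (Nat.eq_zero_of_zero_dvd hn1)
      have hcond : r' ∣ r' * n ∧ r' * n ∣ M ∧ M ≠ 0 :=
        ⟨dvd_mul_right r' n, by rw [hM']; exact mul_dvd_mul_left r' hn1, by omega⟩
      rw [if_pos hcond, hMr'n n hn1]
      have hrc : (r : ℂ) = (g : ℂ) * (r' : ℂ) := by exact_mod_cast congrArg (Nat.cast (R := ℂ)) hrg.symm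
      have hr'c : ((r' : ℕ) : ℂ) ≠ 0 := Nat.cast_ne_zero.mpr hr'ne
      have hnc : ((n : ℕ) : ℂ) ≠ 0 := Nat.cast_ne_zero.mpr hn0
      push_cast
      rw [hrc]
      field_simp
    have hRn : ∀ n ∈ M'.divisors,
        ((g * n : ℕ) : ℂ) * (if (r' * n) ∣ M ∧ M ≠ 0
          then (ε ^ n) ^ (M / (r' * n)) / ((M / (r' * n) : ℕ) : ℂ) else 0)
          = (g : ℂ) * ε ^ M' * (((n : ℕ) : ℂ) * (((M' / n : ℕ) : ℂ))⁻¹) := by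
      intro n hn
      obtain ⟨hn1, -⟩ := Nat.mem_divisors.mp hn
      have hcond : r' * n ∣ M ∧ M ≠ 0 :=
        ⟨by rw [hM']; exact mul_dvd_mul_left r' hn1, by omega⟩
      rw [if_pos hcond, hMr'n n hn1, ← pow_mul, Nat.mul_div_cancel' hn1]
      push_cast
      ring
    rw [Finset.sum_congr rfl hLn, Finset.sum_congr rfl hRn, ← Finset.mul_sum, ← Finset.mul_sum]
    have hueq : u = ε ^ M' := by
      rw [hu, hM', hε]
      exact eps_pow_eq (by omega) k M'
    rw [hueq]
    congr 1
    have h1 : ∀ n ∈ M'.divisors, ((M' / n : ℕ) : ℂ) * ((n : ℕ) : ℂ)⁻¹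
        = (fun d => ((d : ℕ) : ℂ) * (((M' / d : ℕ) : ℂ))⁻¹) (M' / n) := by
      intro n hn
      simp only
      rw [Nat.div_div_self (Nat.mem_divisors.mp hn).1 hM'ne]
    rw [Finset.sum_congr rfl h1,
      Nat.sum_div_divisors M' (fun d => ((d : ℕ) : ℂ) * (((M' / d : ℕ) : ℂ))⁻¹)]
  · rw [Finset.sum_eq_zero, Finset.sum_eq_zero]
    · intro n _
      rw [if_neg (fun h => hdM (dvd_trans (Dvd.intro n rfl) h.1)), mul_zero]
    · intro m _
      rw [if_neg (fun h => hdM (dvd_trans h.1 h.2.1)), mul_zero]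

end BBPTaux

/-- **(Unconditional K-theoretic content of Theorem 8.7; conjecture of
Benini–Bonelli–Poggi–Tanzini.)** Let `r ≥ 1`, `k ∈ ℤ`, `g = gcd(r,k)`, and let `α₁,α₂,α₃` be
nonzero complex numbers, none a root of unity, with `α₁α₂α₃ = exp(πik/r)`. Then
`exp(Σ_{m≥1}(1/m)·G_m(q)) = Π_{n≥1}(1 − ((−1)^{kr} q^{r/g})^n)^{−gn}` in `ℂ⟦q⟧`,
coefficientwise: for the coefficient of `q^N` only `m, n ≤ N` contribute. -/
theorem BBPT_subtorus_macmahon (r : ℕ) (hr : 1 ≤ r) (k : ℤ) (α : Fin 3 → ℂ)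
    (hα0 : ∀ i, α i ≠ 0) (hαru : ∀ i, ∀ m : ℕ, m ≠ 0 → α i ^ m ≠ 1)
    (hprod : α 0 * α 1 * α 2 = Complex.exp ((Real.pi : ℂ) * Complex.I * k / r)) (N : ℕ) :
    PowerSeries.coeff N
        (psExp (PowerSeries.mk fun M =>
          ∑ m ∈ Finset.Icc 1 M, (m : ℂ)⁻¹ * PowerSeries.coeff M (Gser α r k m)))
      = PowerSeries.coeff N
          (∏ n ∈ Finset.Icc 1 N,
            ((1 - (PowerSeries.C ((-1 : ℂ) ^ (k * (r : ℤ))) *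
                PowerSeries.X ^ (r / Int.gcd (r : ℤ) k)) ^ n)⁻¹) ^ (Int.gcd (r : ℤ) k * n)) := by

  classical
  set g := Int.gcd (r : ℤ) k with hg
  set r' := r / g with hr'def
  set ε : ℂ := (-1 : ℂ) ^ (k * (r : ℤ)) with hε
  have hgr : g ∣ r := by
    have h0 := Int.gcd_dvd_left (a := (r : ℤ)) (b := k)
    exact_mod_cast h0
  have hgne : g ≠ 0 := fun h0 => by
    have h1 := (Int.gcd_eq_zero_iff.mp h0).1
    have : r = 0 := by exact_mod_cast h1
    omega
  have hrg : g * r' = r := Nat.mul_div_cancel' hgr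
  have hr'ne : r' ≠ 0 := by rintro h0; rw [h0, mul_zero] at hrg; omega
  have h1 : PowerSeries.coeff N (psExp (PowerSeries.mk fun M =>
      ∑ m ∈ Finset.Icc 1 M, (m : ℂ)⁻¹ * PowerSeries.coeff M (Gser α r k m)))
      = PowerSeries.coeff N (psExp (∑ n ∈ Finset.Icc 1 N,
          (g * n) • BBPTaux.lseries (ε ^ n) (r' * n))) :=
    BBPTaux.coeff_psExp_congr fun M hM =>
      BBPTaux.coeff_F_eq hr k α hα0 hαru hprod hM
  rw [h1, BBPTaux.psExp_sum _ _ (fun n _ => by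
    rw [map_nsmul, BBPTaux.constantCoeff_lseries, smul_zero])]
  congr 1
  refine Finset.prod_congr rfl fun n hn => ?_
  rw [BBPTaux.psExp_nsmul (BBPTaux.constantCoeff_lseries _ _) (g * n),
    BBPTaux.psExp_lseries _ (Nat.mul_ne_zero hr'ne
      (by have := (Finset.mem_Icc.mp hn).1; omega))]
  congr 3
  rw [mul_pow, ← map_pow, ← pow_mul]
end

section
/- (Plethystic exponential form of the motivic DT partition function, formula (6.3)/(eqn:motivic_exp)) Work in the field ℚ(ℓ) of rational functions in one variable ℓ (standing for 𝕃^{1/2}). Let r ≥ 1. Then for every N ≥ 0, the coefficient of Q^N in the formal power series Π_{m=1}^{N} Π_{k=0}^{rm−1} (1 − ℓ^{4+2k−rm} Q^m)^{−1} ∈ ℚ(ℓ)⟦Q⟧ equals the coefficient of Q^N in exp(Σ_{m=1}^{N} (1/m)·H_m(Q)), where H_m(Q) := Q^m ℓ^{3m}(ℓ^{rm} − ℓ^{−rm}) / ((1 − Q^m ℓ^{rm})(1 − Q^m ℓ^{−rm})(ℓ^m − ℓ^{−m})), each H_m expanded as a power series in Q by geometric expansion of the factors (1 − Q^m ℓ^{±rm})^{−1}.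 -/
/-- The field `ℚ(ℓ)` of rational functions in one variable `ℓ` (standing for `𝕃^{1/2}`). -/
abbrev RF := RatFunc ℚ

/-- The variable `ℓ`. -/
noncomputable def ell : RF := RatFunc.X

/-- `H_m(Q) = Q^m ℓ^{3m}(ℓ^{rm} − ℓ^{−rm}) / ((1 − Q^mℓ^{rm})(1 − Q^mℓ^{−rm})(ℓ^m − ℓ^{−m}))`,
the factors `(1 − Q^m ℓ^{±rm})⁻¹` expanded geometrically as power series in `Q`. -/
noncomputable def Hser (r m : ℕ) : PowerSeries RF :=
  PowerSeries.C
      (ell ^ (3 * (m : ℤ)) * (ell ^ ((r : ℤ) * m) - ell ^ (-((r : ℤ) * m))) /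
        (ell ^ (m : ℤ) - ell ^ (-(m : ℤ)))) *
    PowerSeries.X ^ m *
    (1 - PowerSeries.C (ell ^ ((r : ℤ) * m)) * PowerSeries.X ^ m)⁻¹ *
    (1 - PowerSeries.C (ell ^ (-((r : ℤ) * m))) * PowerSeries.X ^ m)⁻¹

open PowerSeries Finset

namespace MotAux

instance : CharZero RF :=
  charZero_of_injective_algebraMap (algebraMap ℚ RF).injective

variable {K : Type*} [Field K]

lemma nat_div_facts {m n : ℕ} (hm : 1 ≤ m) (hmn : m ≤ n) (hd : m ∣ n) :
    m ∣ n - m ∧ (n - m) / m = n / m - 1 ∧ 1 ≤ n / m := by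
  obtain ⟨q, rfl⟩ := hd
  have hq : 1 ≤ q := by
    by_contra h
    have hq0 : q = 0 := by omega
    subst hq0
    simp only [Nat.mul_zero] at hmn
    omega
  have e1 : m * q - m = m * (q - 1) := by rw [Nat.mul_sub, mul_one]
  refine ⟨⟨q - 1, e1⟩, ?_, ?_⟩
  · rw [e1, Nat.mul_div_cancel_left _ (by omega), Nat.mul_div_cancel_left _ (by omega : 0 < m)]
  · rw [Nat.mul_div_cancel_left _ (by omega : 0 < m)]; exact hq

lemma dvd_of_dvd_sub' {m n : ℕ} (hmn : m ≤ n) (h : m ∣ n - m) : m ∣ n := by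
  obtain ⟨t, ht⟩ := h
  exact ⟨t + 1, by rw [Nat.mul_add, mul_one]; omega⟩

lemma coeff_mul_one_sub (f : K⟦X⟧) (a : K) (m n : ℕ) :
    PowerSeries.coeff n (f * (1 - PowerSeries.C a * X ^ m)) =
      PowerSeries.coeff n f - a * (if m ≤ n then PowerSeries.coeff (n - m) f else 0) := by
  rw [mul_sub, mul_one, map_sub]
  congr 1
  rw [show f * (PowerSeries.C a * X ^ m) = f * PowerSeries.C a * X ^ m by ring,
    coeff_mul_X_pow']
  split_ifs with h
  · rw [coeff_mul_C, mul_comm]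
  · rw [mul_zero]

lemma constCoeff_one_sub (a : K) {m : ℕ} (hm : 1 ≤ m) :
    PowerSeries.constantCoeff (1 - PowerSeries.C a * X ^ m) = 1 := by
  simp [map_pow, zero_pow (by omega : m ≠ 0)]

lemma geomInv (a : K) {m : ℕ} (hm : 1 ≤ m) :
    (1 - PowerSeries.C a * X ^ m)⁻¹ =
      PowerSeries.mk fun n => if m ∣ n then a ^ (n / m) else 0 := by
  rw [PowerSeries.inv_eq_iff_mul_eq_one (by rw [constCoeff_one_sub a hm]; exact one_ne_zero)]
  ext n
  rw [coeff_mul_one_sub, coeff_mk, coeff_one]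
  rcases Nat.eq_zero_or_pos n with h0 | h0
  · subst h0
    have h1 : ¬ m ≤ 0 := by omega
    simp [h1]
  · rw [if_neg (show ¬ n = 0 by omega)]
    by_cases hmn : m ≤ n
    · rw [if_pos hmn, coeff_mk]
      by_cases hd : m ∣ n
      · obtain ⟨hd1, hd2, hd3⟩ := nat_div_facts hm hmn hd
        rw [if_pos hd, if_pos hd1, hd2, ← pow_succ',
          show n / m - 1 + 1 = n / m by omega, sub_self]
      · rw [if_neg hd, if_neg (fun h => hd (dvd_of_dvd_sub' hmn h)), mul_zero, sub_zero]
    · rw [if_neg hmn, if_neg (fun hd => hmn (Nat.le_of_dvd h0 hd)), mul_zero, sub_zero]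

lemma geom2Inv (a b : K) {m : ℕ} (hm : 1 ≤ m) :
    (1 - PowerSeries.C a * X ^ m)⁻¹ * (1 - PowerSeries.C b * X ^ m)⁻¹ =
      PowerSeries.mk fun n =>
        if m ∣ n then ∑ t ∈ range (n / m + 1), a ^ t * b ^ (n / m - t) else 0 := by
  have key : (PowerSeries.mk fun n =>
        if m ∣ n then ∑ t ∈ range (n / m + 1), a ^ t * b ^ (n / m - t) else 0) *
      (1 - PowerSeries.C a * X ^ m) =
      PowerSeries.mk fun n => if m ∣ n then b ^ (n / m) else 0 := by
    ext n
    rw [coeff_mul_one_sub]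
    simp only [coeff_mk]
    rcases Nat.eq_zero_or_pos n with h0 | h0
    · subst h0
      have h1 : ¬ m ≤ 0 := by omega
      simp [h1]
    · by_cases hmn : m ≤ n
      · rw [if_pos hmn]
        by_cases hd : m ∣ n
        · obtain ⟨hd1, hd2, hd3⟩ := nat_div_facts hm hmn hd
          rw [if_pos hd, if_pos hd, if_pos hd1, hd2]
          set q := n / m with hq
          rw [Finset.sum_range_succ' (fun t => a ^ t * b ^ (q - t)),
            show q - 1 + 1 = q by omega, Finset.mul_sum]
          have e : ∀ t, a * (a ^ t * b ^ (q - 1 - t)) = a ^ (t + 1) * b ^ (q - (t + 1)) := by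
            intro t
            rw [show q - 1 - t = q - (t + 1) by omega, pow_succ']
            ring
          simp only [e]
          simp
        · rw [if_neg hd, if_neg hd, if_neg (fun h => hd (dvd_of_dvd_sub' hmn h)),
            mul_zero, sub_zero]
      · rw [if_neg hmn, if_neg (fun hd => hmn (Nat.le_of_dvd h0 hd)),
          if_neg (fun hd => hmn (Nat.le_of_dvd h0 hd)), mul_zero, sub_zero]
  have hA : (1 - PowerSeries.C a * X ^ m) * (1 - PowerSeries.C a * X ^ m)⁻¹ = 1 :=
    PowerSeries.mul_inv_cancel _ (by rw [constCoeff_one_sub a hm]; exact one_ne_zero)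
  calc (1 - PowerSeries.C a * X ^ m)⁻¹ * (1 - PowerSeries.C b * X ^ m)⁻¹
      = (1 - PowerSeries.C b * X ^ m)⁻¹ * (1 - PowerSeries.C a * X ^ m)⁻¹ := by ring
    _ = (PowerSeries.mk fun n => if m ∣ n then b ^ (n / m) else 0) *
          (1 - PowerSeries.C a * X ^ m)⁻¹ := by rw [geomInv b hm]
    _ = _ := by
        rw [← key, mul_assoc, hA, mul_one]

lemma coeff_derivativeFun' (f : K⟦X⟧) (n : ℕ) :
    PowerSeries.coeff n (derivativeFun f) = PowerSeries.coeff (n + 1) f * (n + 1) :=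
  coeff_derivative f n

lemma d_sub (f g : K⟦X⟧) :
    derivativeFun (f - g) = derivativeFun f - derivativeFun g := by
  ext n
  rw [coeff_derivativeFun', map_sub, map_sub, coeff_derivativeFun', coeff_derivativeFun', sub_mul]

lemma d_X_pow {m : ℕ} (hm : 1 ≤ m) :
    derivativeFun ((X : K⟦X⟧) ^ m) = PowerSeries.C (m : K) * X ^ (m - 1) := by
  ext n
  rw [coeff_derivativeFun', coeff_X_pow, coeff_C_mul, coeff_X_pow]
  by_cases h : n + 1 = m
  · rw [if_pos h, if_pos (by omega), one_mul, mul_one]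
    exact_mod_cast congrArg (Nat.cast (R := K)) h
  · rw [if_neg h, if_neg (by omega), zero_mul, mul_zero]

lemma d_one_sub (a : K) {m : ℕ} (hm : 1 ≤ m) :
    derivativeFun (1 - PowerSeries.C a * X ^ m) =
      -(PowerSeries.C a * PowerSeries.C (m : K) * X ^ (m - 1)) := by
  rw [d_sub, derivativeFun_one, ← smul_eq_C_mul (X ^ m) a, derivativeFun_smul,
    d_X_pow hm, smul_eq_C_mul]
  ring

lemma d_inv' (f : K⟦X⟧) (hf : PowerSeries.constantCoeff f ≠ 0) :
    derivativeFun f⁻¹ = -(f⁻¹ * f⁻¹ * derivativeFun f) := by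
  have h1 : f⁻¹ * f = 1 := PowerSeries.inv_mul_cancel f hf
  have h2 := congrArg derivativeFun h1
  rw [derivativeFun_mul, derivativeFun_one] at h2
  simp only [smul_eq_mul] at h2
  linear_combination f⁻¹ * h2 - derivativeFun f⁻¹ * h1

lemma d_inv_one_sub (a : K) {m : ℕ} (hm : 1 ≤ m) :
    derivativeFun ((1 - PowerSeries.C a * X ^ m)⁻¹) =
      (PowerSeries.C a * PowerSeries.C (m : K) * X ^ (m - 1) *
          (1 - PowerSeries.C a * X ^ m)⁻¹) *
        (1 - PowerSeries.C a * X ^ m)⁻¹ := by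
  rw [d_inv' _ (by rw [constCoeff_one_sub a hm]; exact one_ne_zero), d_one_sub a hm]
  ring

lemma d_prod {ι : Type*} (s : Finset ι) (g l : ι → K⟦X⟧)
    (h : ∀ i ∈ s, derivativeFun (g i) = l i * g i) :
    derivativeFun (∏ i ∈ s, g i) = (∑ i ∈ s, l i) * ∏ i ∈ s, g i := by
  induction s using Finset.cons_induction with
  | empty => simp [derivativeFun_one]
  | cons i s hi ih =>
    rw [Finset.prod_cons, Finset.sum_cons, derivativeFun_mul,
      ih (fun j hj => h j (Finset.mem_cons_of_mem hj)), h i (Finset.mem_cons_self i s)]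
    simp only [smul_eq_mul]
    ring

lemma coeff_pow_eq_zero {f : K⟦X⟧} (hf : PowerSeries.constantCoeff f = 0) {b k : ℕ}
    (h : b < k) : PowerSeries.coeff b (f ^ k) = 0 := by
  have hdvd : (X : K⟦X⟧) ^ k ∣ f ^ k := pow_dvd_pow_of_dvd (X_dvd_iff.mpr hf) k
  exact (X_pow_dvd_iff.mp hdvd) b h

lemma coeff_psExp_ext {f : K⟦X⟧} (hf : PowerSeries.constantCoeff f = 0) {b M : ℕ}
    (h : b ≤ M) :
    PowerSeries.coeff b (psExp f) =
      ∑ k ∈ range (M + 1), (Nat.factorial k : K)⁻¹ * PowerSeries.coeff b (f ^ k) := by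
  rw [psExp, coeff_mk]
  apply Finset.sum_subset (Finset.range_subset_range.mpr (by omega))
  intro k hk hknot
  rw [Finset.mem_range] at hk hknot
  rw [coeff_pow_eq_zero hf (by omega), mul_zero]

lemma d_pow (f : K⟦X⟧) (k : ℕ) :
    derivativeFun (f ^ (k + 1)) =
      PowerSeries.C ((k : K) + 1) * (f ^ k * derivativeFun f) := by
  induction k with
  | zero => simp
  | succ k ih =>
    rw [pow_succ, derivativeFun_mul, ih]
    simp only [smul_eq_mul]
    have e : PowerSeries.C ((k : K) + 1 + 1) = PowerSeries.C ((k : K) + 1) + 1 := by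
      rw [map_add, map_one]
    push_cast
    rw [e]
    ring

lemma d_psExp [CharZero K] (f : K⟦X⟧) (hf : PowerSeries.constantCoeff f = 0) :
    derivativeFun (psExp f) = derivativeFun f * psExp f := by
  ext n
  rw [coeff_derivativeFun', coeff_psExp_ext hf (le_refl (n + 1)), Finset.sum_mul,
    Finset.sum_range_succ']
  have e0 : (Nat.factorial 0 : K)⁻¹ * PowerSeries.coeff (n + 1) (f ^ 0) * (↑n + 1) = 0 := by
    rw [pow_zero, coeff_one, if_neg (Nat.succ_ne_zero n)]
    ring
  rw [e0, add_zero]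
  have eL : ∀ k, (Nat.factorial (k + 1) : K)⁻¹ * PowerSeries.coeff (n + 1) (f ^ (k + 1)) *
      (↑n + 1) = (Nat.factorial k : K)⁻¹ * PowerSeries.coeff n (f ^ k * derivativeFun f) := by
    intro k
    have h1 : PowerSeries.coeff (n + 1) (f ^ (k + 1)) * (↑n + 1) =
        PowerSeries.coeff n (derivativeFun (f ^ (k + 1))) := (coeff_derivativeFun' _ _).symm
    rw [mul_assoc, h1, d_pow, coeff_C_mul]
    have hk : ((k : K) + 1) ≠ 0 := Nat.cast_add_one_ne_zero k
    have hfac : (Nat.factorial k : K) ≠ 0 :=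
      Nat.cast_ne_zero.mpr (Nat.factorial_ne_zero k)
    rw [Nat.factorial_succ]
    push_cast
    field_simp
  simp only [eL]
  rw [coeff_mul]
  have eR : ∀ p ∈ antidiagonal n, PowerSeries.coeff p.1 (derivativeFun f) *
      PowerSeries.coeff p.2 (psExp f) =
      ∑ k ∈ range (n + 1), (Nat.factorial k : K)⁻¹ *
        (PowerSeries.coeff p.1 (derivativeFun f) * PowerSeries.coeff p.2 (f ^ k)) := by
    intro p hp
    rw [Finset.HasAntidiagonal.mem_antidiagonal] at hp
    rw [coeff_psExp_ext hf (show p.2 ≤ n by omega), Finset.mul_sum]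
    apply Finset.sum_congr rfl
    intro k _
    ring
  rw [Finset.sum_congr rfl eR, Finset.sum_comm]
  apply Finset.sum_congr rfl
  intro k _
  rw [← Finset.mul_sum, ← coeff_mul]
  rw [mul_comm (f ^ k) (derivativeFun f)]

lemma coeff_psExp_zero (f : K⟦X⟧) : PowerSeries.coeff 0 (psExp f) = 1 := by
  simp [psExp]

lemma coeff_eq_of_logDeriv [CharZero K] {P Q L M : K⟦X⟧} {N : ℕ}
    (hP : derivativeFun P = L * P) (hQ : derivativeFun Q = M * Q)
    (h0 : PowerSeries.coeff 0 P = PowerSeries.coeff 0 Q)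
    (hLM : ∀ i, i < N → PowerSeries.coeff i L = PowerSeries.coeff i M) :
    ∀ n, n ≤ N → PowerSeries.coeff n P = PowerSeries.coeff n Q := by
  intro n
  induction n using Nat.strong_induction_on with
  | _ n ih =>
    intro hn
    match n with
    | 0 => exact h0
    | Nat.succ n =>
      have e1 : PowerSeries.coeff (n + 1) P * ((n : K) + 1) =
          PowerSeries.coeff (n + 1) Q * ((n : K) + 1) := by
        have l1 := coeff_derivativeFun' P n
        have l2 := coeff_derivativeFun' Q n
        rw [hP] at l1; rw [hQ] at l2
        rw [← l1, ← l2, coeff_mul, coeff_mul]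
        apply Finset.sum_congr rfl
        intro p hp
        rw [Finset.HasAntidiagonal.mem_antidiagonal] at hp
        rw [hLM p.1 (by omega), ih p.2 (by omega) (by omega)]
      have hne : ((n : K) + 1) ≠ 0 := Nat.cast_add_one_ne_zero n
      exact mul_right_cancel₀ hne e1

/-! ### Facts specific to `RF` -/

lemma ell_ne_zero : (ell : RF) ≠ 0 := RatFunc.X_ne_zero

lemma ell_pow_ne_one {k : ℕ} (hk : k ≠ 0) : (ell : RF) ^ k ≠ 1 := by
  intro h
  rw [ell, ← RatFunc.algebraMap_X (K := ℚ), ← map_pow,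
    ← map_one (algebraMap (Polynomial ℚ) RF)] at h
  have h2 := RatFunc.algebraMap_injective ℚ h
  have h3 := congrArg Polynomial.natDegree h2
  rw [Polynomial.natDegree_X_pow, Polynomial.natDegree_one] at h3
  omega

lemma sub_inv_ne_zero {x : RF} (hx : x ≠ 0) (hx2 : x * x ≠ 1) : x - x⁻¹ ≠ 0 := by
  intro h
  have h1 : x = x⁻¹ := sub_eq_zero.mp h
  apply hx2
  calc x * x = x * x⁻¹ := by rw [← h1]
    _ = 1 := mul_inv_cancel₀ hx

lemma div_id {F : Type*} [Field F] (u v w : F) (hu : u ≠ 0) (hv : v ≠ 0) (hw : w ≠ 0)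
    (hu2 : u ^ 2 - 1 ≠ 0) (hw2 : w ^ 2 - 1 ≠ 0) :
    u ^ 4 * v⁻¹ * ((v ^ 2 - 1) / (u ^ 2 - 1)) =
      u ^ 3 * (w - w⁻¹) / (u - u⁻¹) * ((v - v⁻¹) / (w - w⁻¹)) := by
  have f1 : u - u⁻¹ = (u ^ 2 - 1) / u := by
    rw [eq_div_iff hu, sub_mul, inv_mul_cancel₀ hu]; ring
  have f2 : w - w⁻¹ = (w ^ 2 - 1) / w := by
    rw [eq_div_iff hw, sub_mul, inv_mul_cancel₀ hw]; ring
  have f3 : v - v⁻¹ = (v ^ 2 - 1) / v := by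
    rw [eq_div_iff hv, sub_mul, inv_mul_cancel₀ hv]; ring
  rw [f1, f2, f3]
  field_simp

lemma ell_pow_sub_inv_ne {k : ℕ} (hk : k ≠ 0) : (ell : RF) ^ k - ((ell : RF) ^ k)⁻¹ ≠ 0 := by
  apply sub_inv_ne_zero (pow_ne_zero _ ell_ne_zero)
  rw [← pow_add]
  exact ell_pow_ne_one (by omega)

lemma scalar_id (r : ℕ) (hr : 1 ≤ r) {m j : ℕ} (hm : 1 ≤ m) (hj : 1 ≤ j) :
    ∑ k ∈ range (r * m), ((ell : RF) ^ (4 + 2 * (k : ℤ) - (r : ℤ) * m)) ^ j =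
      (ell ^ (3 * (j : ℤ)) * (ell ^ ((r : ℤ) * j) - ell ^ (-((r : ℤ) * j))) /
          (ell ^ (j : ℤ) - ell ^ (-(j : ℤ)))) *
        ∑ t ∈ range m, (ell ^ ((r : ℤ) * j)) ^ t * (ell ^ (-((r : ℤ) * j))) ^ (m - 1 - t) := by
  have hl := ell_ne_zero
  set u : RF := ell ^ j with hu_def
  have hu : u ≠ 0 := pow_ne_zero _ hl
  have e1 : (ell : RF) ^ ((r : ℤ) * j) = u ^ r := by
    rw [show ((r : ℤ) * j) = ((r * j : ℕ) : ℤ) by push_cast; ring, zpow_natCast, pow_mul']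
  have e2 : (ell : RF) ^ (-((r : ℤ) * j)) = (u ^ r)⁻¹ := by rw [zpow_neg, e1]
  have e3 : (ell : RF) ^ (3 * (j : ℤ)) = u ^ 3 := by
    rw [show (3 * (j : ℤ)) = ((3 * j : ℕ) : ℤ) by push_cast; ring, zpow_natCast, pow_mul']
  have e4 : (ell : RF) ^ (j : ℤ) = u := zpow_natCast ell j
  have e5 : (ell : RF) ^ (-(j : ℤ)) = u⁻¹ := by rw [zpow_neg, e4]
  have e6 : ∀ k : ℕ, ((ell : RF) ^ (4 + 2 * (k : ℤ) - (r : ℤ) * m)) ^ j =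
      (u ^ 4 * (u ^ (r * m))⁻¹) * (u ^ 2) ^ k := by
    intro k
    rw [← zpow_natCast ((ell : RF) ^ (4 + 2 * (k : ℤ) - (r : ℤ) * m)) j, ← zpow_mul]
    rw [show (4 + 2 * (k : ℤ) - (r : ℤ) * m) * j =
      (((4 * j : ℕ) : ℤ) - ((r * m * j : ℕ) : ℤ)) + ((2 * j * k : ℕ) : ℤ) by push_cast; ring]
    rw [zpow_add₀ hl, zpow_sub₀ hl, zpow_natCast, zpow_natCast, zpow_natCast]
    rw [pow_mul' ell 4 j, show r * m * j = (r * m) * j from rfl, pow_mul' ell (r * m) j,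
      show 2 * j * k = (2 * j) * k by ring, pow_mul ell (2 * j) k, pow_mul' ell 2 j]
    rw [div_eq_mul_inv]
  simp only [e6]
  rw [← Finset.mul_sum]
  have hy : (u ^ 2 : RF) ≠ 1 := by
    rw [hu_def, ← pow_mul]
    exact ell_pow_ne_one (by omega)
  rw [geom_sum_eq hy]
  rw [e1, e2, e3, e4, e5]
  have hw : u ^ r - (u ^ r)⁻¹ ≠ 0 := by
    rw [hu_def, ← pow_mul]
    exact ell_pow_sub_inv_ne (Nat.mul_ne_zero (by omega) (by omega))
  have hu' : u - u⁻¹ ≠ 0 := by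
    rw [hu_def]
    exact ell_pow_sub_inv_ne (by omega)
  have hgeom := geom_sum₂_mul (u ^ r) ((u ^ r)⁻¹) m
  have hsum : ∑ t ∈ range m, (u ^ r) ^ t * ((u ^ r)⁻¹) ^ (m - 1 - t) =
      ((u ^ r) ^ m - ((u ^ r)⁻¹) ^ m) / (u ^ r - (u ^ r)⁻¹) :=
    (eq_div_iff hw).mpr hgeom
  rw [hsum]
  have ev1 : ((u ^ 2) ^ (r * m) : RF) = (u ^ (r * m)) ^ 2 := by
    rw [← pow_mul u, ← pow_mul u, mul_comm 2 (r * m)]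
  have ev2 : ((u ^ r) ^ m : RF) = u ^ (r * m) := by rw [← pow_mul]
  have ev3 : (((u ^ r)⁻¹) ^ m : RF) = (u ^ (r * m))⁻¹ := by rw [inv_pow, ev2]
  rw [ev1, ev2, ev3]
  have hv : (u ^ (r * m) : RF) ≠ 0 := pow_ne_zero _ hu
  have hu2 : (u ^ 2 - 1 : RF) ≠ 0 := sub_ne_zero.mpr hy
  have hwz : (u ^ r : RF) ≠ 0 := pow_ne_zero _ hu
  have hw2 : ((u ^ r) ^ 2 - 1 : RF) ≠ 0 := by
    apply sub_ne_zero.mpr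
    rw [hu_def, ← pow_mul, ← pow_mul]
    exact ell_pow_ne_one (Nat.mul_ne_zero (by omega) (Nat.mul_ne_zero (by omega) (by omega)))
  exact div_id u (u ^ (r * m)) (u ^ r) hu hv hwz hu2 hw2

lemma coeff_logterm (a : K) {m : ℕ} (hm : 1 ≤ m) (i : ℕ) :
    PowerSeries.coeff i (PowerSeries.C a * PowerSeries.C (m : K) * X ^ (m - 1) *
      (1 - PowerSeries.C a * X ^ m)⁻¹) =
    if m ∣ (i + 1) then (m : K) * a ^ ((i + 1) / m) else 0 := by
  rw [geomInv a hm,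
    show PowerSeries.C a * PowerSeries.C (m : K) * X ^ (m - 1) *
        (PowerSeries.mk fun n => if m ∣ n then a ^ (n / m) else 0) =
      ((PowerSeries.mk fun n => if m ∣ n then a ^ (n / m) else 0) * X ^ (m - 1)) *
        PowerSeries.C a * PowerSeries.C (m : K) by ring,
    coeff_mul_C, coeff_mul_C, coeff_mul_X_pow']
  by_cases hd : m ∣ i + 1
  · have hmn : m ≤ i + 1 := Nat.le_of_dvd (by omega) hd
    obtain ⟨hd1, hd2, hd3⟩ := nat_div_facts hm hmn hd
    rw [if_pos (show m - 1 ≤ i by omega), coeff_mk,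
      show i - (m - 1) = i + 1 - m by omega, if_pos hd1, hd2, if_pos hd]
    rw [show a ^ ((i + 1) / m - 1) * a = a ^ ((i + 1) / m) from by
      rw [← pow_succ]; congr 1; omega]
    ring
  · rw [if_neg hd]
    by_cases hmi : m - 1 ≤ i
    · have hmn : m ≤ i + 1 := by omega
      rw [if_pos hmi, coeff_mk, show i - (m - 1) = i + 1 - m by omega,
        if_neg (fun h => hd (dvd_of_dvd_sub' hmn h)), zero_mul, zero_mul]
    · rw [if_neg hmi, zero_mul, zero_mul]

lemma coeff_Hser (r : ℕ) {m n : ℕ} (hm : 1 ≤ m) (hn : 1 ≤ n) :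
    PowerSeries.coeff n (Hser r m) =
      if m ∣ n then
        (ell ^ (3 * (m : ℤ)) * (ell ^ ((r : ℤ) * m) - ell ^ (-((r : ℤ) * m))) /
            (ell ^ (m : ℤ) - ell ^ (-(m : ℤ)))) *
          ∑ t ∈ range (n / m),
            (ell ^ ((r : ℤ) * m)) ^ t * (ell ^ (-((r : ℤ) * m))) ^ (n / m - 1 - t)
      else 0 := by
  have hH : Hser r m = ((1 - PowerSeries.C (ell ^ ((r : ℤ) * m)) * X ^ m)⁻¹ *
      (1 - PowerSeries.C (ell ^ (-((r : ℤ) * m))) * X ^ m)⁻¹) * X ^ m *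
      PowerSeries.C
        (ell ^ (3 * (m : ℤ)) * (ell ^ ((r : ℤ) * m) - ell ^ (-((r : ℤ) * m))) /
          (ell ^ (m : ℤ) - ell ^ (-(m : ℤ)))) := by
    rw [Hser]; ring
  rw [hH, geom2Inv _ _ hm, coeff_mul_C, coeff_mul_X_pow']
  by_cases hd : m ∣ n
  · have hmn : m ≤ n := Nat.le_of_dvd (by omega) hd
    obtain ⟨hd1, hd2, hd3⟩ := nat_div_facts hm hmn hd
    rw [if_pos hmn, coeff_mk, if_pos hd1, hd2, if_pos hd,
      show n / m - 1 + 1 = n / m by omega]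
    rw [mul_comm]
  · rw [if_neg hd]
    by_cases hmn : m ≤ n
    · rw [if_pos hmn, coeff_mk, if_neg (fun h => hd (dvd_of_dvd_sub' hmn h)), zero_mul]
    · rw [if_neg hmn, zero_mul]

lemma filter_Icc_divisors {n N : ℕ} (h1 : 1 ≤ n) (h2 : n ≤ N) :
    (Finset.Icc 1 N).filter (· ∣ n) = n.divisors := by
  ext m
  simp only [Finset.mem_filter, Finset.mem_Icc, Nat.mem_divisors]
  constructor
  · rintro ⟨-, hd⟩
    exact ⟨hd, by omega⟩
  · rintro ⟨hd, -⟩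
    have hm0 : m ≠ 0 := by
      rintro rfl
      rw [Nat.zero_dvd] at hd
      omega
    exact ⟨⟨by omega, le_trans (Nat.le_of_dvd (by omega) hd) h2⟩, hd⟩

end MotAux

open MotAux

/-- **(Plethystic exponential form of the motivic DT partition function.)** For every `r ≥ 1`
and `N ≥ 0`, the coefficient of `Q^N` in `Π_{m=1}^{N} Π_{k=0}^{rm−1} (1 − ℓ^{4+2k−rm} Q^m)^{−1}`
equals the coefficient of `Q^N` in `exp(Σ_{m=1}^{N} (1/m)·H_m(Q))`. -/
theorem motivic_plethystic_exp (r : ℕ) (hr : 1 ≤ r) (N : ℕ) :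
    PowerSeries.coeff N
        (∏ m ∈ Finset.Icc 1 N, ∏ k ∈ Finset.range (r * m),
          (1 - PowerSeries.C (ell ^ (4 + 2 * (k : ℤ) - (r : ℤ) * m)) *
            PowerSeries.X ^ m)⁻¹)
      = PowerSeries.coeff N
          (psExp (∑ m ∈ Finset.Icc 1 N, PowerSeries.C (m : RF)⁻¹ * Hser r m)) := by
  classical
  set S : PowerSeries RF := ∑ m ∈ Finset.Icc 1 N, PowerSeries.C (m : RF)⁻¹ * Hser r m
    with hSdef
  set P : PowerSeries RF := ∏ m ∈ Finset.Icc 1 N, ∏ k ∈ Finset.range (r * m),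
      (1 - PowerSeries.C (ell ^ (4 + 2 * (k : ℤ) - (r : ℤ) * m)) * PowerSeries.X ^ m)⁻¹
    with hPdef
  set L : PowerSeries RF := ∑ m ∈ Finset.Icc 1 N, ∑ k ∈ Finset.range (r * m),
      PowerSeries.C (ell ^ (4 + 2 * (k : ℤ) - (r : ℤ) * m)) * PowerSeries.C (m : RF) *
        PowerSeries.X ^ (m - 1) *
        (1 - PowerSeries.C (ell ^ (4 + 2 * (k : ℤ) - (r : ℤ) * m)) * PowerSeries.X ^ m)⁻¹
    with hLdef
  have hS0 : PowerSeries.constantCoeff S = 0 := by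
    rw [hSdef, map_sum]
    apply Finset.sum_eq_zero
    intro m hm
    rw [Finset.mem_Icc] at hm
    have hm0 : m ≠ 0 := by omega
    simp [Hser, zero_pow hm0]
  have hP : PowerSeries.derivativeFun P = L * P := by
    rw [hPdef, hLdef]
    apply d_prod
    intro m hm
    rw [Finset.mem_Icc] at hm
    apply d_prod
    intro k _
    exact d_inv_one_sub _ (by omega)
  have hQ : PowerSeries.derivativeFun (psExp S) = PowerSeries.derivativeFun S * psExp S :=
    d_psExp S hS0
  have h0 : PowerSeries.coeff 0 P = PowerSeries.coeff 0 (psExp S) := by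
    rw [coeff_psExp_zero, hPdef, PowerSeries.coeff_zero_eq_constantCoeff, map_prod]
    apply Finset.prod_eq_one
    intro m hm
    rw [Finset.mem_Icc] at hm
    rw [map_prod]
    apply Finset.prod_eq_one
    intro k _
    rw [PowerSeries.constantCoeff_inv, constCoeff_one_sub _ (by omega : 1 ≤ m), inv_one]
  have hLM : ∀ i, i < N → PowerSeries.coeff i L =
      PowerSeries.coeff i (PowerSeries.derivativeFun S) := by
    intro i hi
    have hn1 : 1 ≤ i + 1 := by omega
    have hnN : i + 1 ≤ N := by omega
    have lhs_eq : PowerSeries.coeff i L = ∑ m ∈ (i + 1).divisors,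
        (m : RF) * ∑ k ∈ Finset.range (r * m),
          ((ell : RF) ^ (4 + 2 * (k : ℤ) - (r : ℤ) * m)) ^ ((i + 1) / m) := by
      rw [hLdef]
      simp only [map_sum]
      rw [← filter_Icc_divisors hn1 hnN, Finset.sum_filter]
      apply Finset.sum_congr rfl
      intro m hm
      rw [Finset.mem_Icc] at hm
      have step : ∀ k ∈ Finset.range (r * m), PowerSeries.coeff i
          (PowerSeries.C (ell ^ (4 + 2 * (k : ℤ) - (r : ℤ) * m)) *
            PowerSeries.C (m : RF) * PowerSeries.X ^ (m - 1) *
            (1 - PowerSeries.C (ell ^ (4 + 2 * (k : ℤ) - (r : ℤ) * m)) *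
              PowerSeries.X ^ m)⁻¹) =
          if m ∣ (i + 1) then (m : RF) *
            ((ell : RF) ^ (4 + 2 * (k : ℤ) - (r : ℤ) * m)) ^ ((i + 1) / m) else 0 :=
        fun k _ => coeff_logterm _ (by omega) i
      rw [Finset.sum_congr rfl step]
      split_ifs with h
      · rw [Finset.mul_sum]
      · exact Finset.sum_const_zero
    have rhs_eq : PowerSeries.coeff i (PowerSeries.derivativeFun S) =
        ∑ m ∈ (i + 1).divisors,
          ((m : RF)⁻¹ *
            ((ell ^ (3 * (m : ℤ)) * (ell ^ ((r : ℤ) * m) - ell ^ (-((r : ℤ) * m))) /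
                (ell ^ (m : ℤ) - ell ^ (-(m : ℤ)))) *
              ∑ t ∈ Finset.range ((i + 1) / m),
                (ell ^ ((r : ℤ) * m)) ^ t *
                  (ell ^ (-((r : ℤ) * m))) ^ ((i + 1) / m - 1 - t))) *
            ((i + 1 : ℕ) : RF) := by
      rw [coeff_derivativeFun']
      have inner : PowerSeries.coeff (i + 1) S = ∑ m ∈ (i + 1).divisors,
          (m : RF)⁻¹ *
            ((ell ^ (3 * (m : ℤ)) * (ell ^ ((r : ℤ) * m) - ell ^ (-((r : ℤ) * m))) /
                (ell ^ (m : ℤ) - ell ^ (-(m : ℤ)))) *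
              ∑ t ∈ Finset.range ((i + 1) / m),
                (ell ^ ((r : ℤ) * m)) ^ t *
                  (ell ^ (-((r : ℤ) * m))) ^ ((i + 1) / m - 1 - t)) := by
        rw [hSdef]
        simp only [map_sum, PowerSeries.coeff_C_mul]
        rw [← filter_Icc_divisors hn1 hnN, Finset.sum_filter]
        apply Finset.sum_congr rfl
        intro m hm
        rw [Finset.mem_Icc] at hm
        rw [coeff_Hser r (by omega) hn1]
        split_ifs with h
        · rfl
        · exact mul_zero _
      rw [inner, Finset.sum_mul]
      apply Finset.sum_congr rfl
      intro m _
      congr 1 <;> norm_cast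
    rw [lhs_eq, rhs_eq,
      ← Nat.sum_div_divisors (i + 1) (fun d =>
        ((d : RF)⁻¹ *
          ((ell ^ (3 * (d : ℤ)) * (ell ^ ((r : ℤ) * d) - ell ^ (-((r : ℤ) * d))) /
              (ell ^ (d : ℤ) - ell ^ (-(d : ℤ)))) *
            ∑ t ∈ Finset.range ((i + 1) / d),
              (ell ^ ((r : ℤ) * d)) ^ t *
                (ell ^ (-((r : ℤ) * d))) ^ ((i + 1) / d - 1 - t))) *
          ((i + 1 : ℕ) : RF))]
    apply Finset.sum_congr rfl
    intro m hm
    rw [Nat.mem_divisors] at hm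
    obtain ⟨hd, hn0⟩ := hm
    have hm1 : 1 ≤ m := by
      rcases Nat.eq_zero_or_pos m with rfl | h
      · rw [Nat.zero_dvd] at hd; omega
      · omega
    set j := (i + 1) / m with hjdef
    have hj1 : 1 ≤ j := (nat_div_facts hm1 (Nat.le_of_dvd (by omega) hd) hd).2.2
    have hmj : i + 1 = m * j := (Nat.mul_div_cancel' hd).symm
    have hjm : (i + 1) / j = m := Nat.div_div_self hd (by omega)
    rw [hjm]
    have hcast : ((i + 1 : ℕ) : RF) = (m : RF) * (j : RF) := by
      rw [hmj]; push_cast; ring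
    rw [hcast, scalar_id r hr hm1 hj1]
    have hjne : (j : RF) ≠ 0 := Nat.cast_ne_zero.mpr (by omega)
    have hgen : ∀ E : RF, (m : RF) * E = ((j : RF)⁻¹ * E) * ((m : RF) * (j : RF)) := by
      intro E; field_simp
    exact hgen _
  exact coeff_eq_of_logDeriv hP hQ h0 hLM N le_rfl
end
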